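/- arXiv:2005.00379 — 5 statements merged into one kernel-verified Lean document; each statement's English description precedes it below -/
import Mathlib

section
/- Let m, n ≥ 3. If A is a 312-avoiding m×n (0,1)-matrix, then the number of 1's of A is at most 2(m + n − 2). -/
/-- Number of 1's of an `m × n` (0,1)-matrix `A` (1-indexed entries). -/
def onesCount (m n : ℕ) (A : ℕ → ℕ → Bool) : ℕ :=
  (((Finset.Icc 1 m) ×ˢ (Finset.Icc 1 n)).filter fun p => A p.1 p.2 = true).card

/-- `A` is 312-avoiding. -/
def Avoid312 (m n : ℕ) (A : ℕ → ℕ → Bool) : Prop :=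
  ¬ ∃ r₁ r₂ r₃ c₁ c₂ c₃ : ℕ,
    1 ≤ r₁ ∧ r₁ < r₂ ∧ r₂ < r₃ ∧ r₃ ≤ m ∧
    1 ≤ c₁ ∧ c₁ < c₂ ∧ c₂ < c₃ ∧ c₃ ≤ n ∧
    A r₁ c₃ = true ∧ A r₂ c₁ = true ∧ A r₃ c₂ = true

namespace P13

open Finset

/-- count of ones of `A` inside `R × C`. -/
def ones (A : ℕ → ℕ → Bool) (R C : Finset ℕ) : ℕ :=
  ((R ×ˢ C).filter fun p => A p.1 p.2 = true).card

/-- 0/1 indicator. -/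
def dd (A : ℕ → ℕ → Bool) (i j : ℕ) : ℕ := if A i j = true then 1 else 0

lemma dd_le_one (A : ℕ → ℕ → Bool) (i j : ℕ) : dd A i j ≤ 1 := by
  unfold dd; split <;> omega

lemma dd_eq_one (A : ℕ → ℕ → Bool) {i j : ℕ} (h : A i j = true) : dd A i j = 1 := by
  simp [dd, h]

lemma dd_eq_zero (A : ℕ → ℕ → Bool) {i j : ℕ} (h : A i j = false) : dd A i j = 0 := by
  simp [dd, h]

/-- local avoidance predicate -/
def Av (A : ℕ → ℕ → Bool) (R C : Finset ℕ) : Prop :=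
  ∀ r1 ∈ R, ∀ r2 ∈ R, ∀ r3 ∈ R, ∀ c1 ∈ C, ∀ c2 ∈ C, ∀ c3 ∈ C,
    r1 < r2 → r2 < r3 → c1 < c2 → c2 < c3 →
    A r1 c3 = true → A r2 c1 = true → A r3 c2 = true → False

lemma av_mono {A : ℕ → ℕ → Bool} {R C R' C' : Finset ℕ} (h : Av A R C)
    (hR : R' ⊆ R) (hC : C' ⊆ C) : Av A R' C' :=
  fun r1 h1 r2 h2 r3 h3 c1 g1 c2 g2 c3 g3 =>
    h r1 (hR h1) r2 (hR h2) r3 (hR h3) c1 (hC g1) c2 (hC g2) c3 (hC g3)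

lemma av_impl {A A' : ℕ → ℕ → Bool} {R C : Finset ℕ}
    (hle : ∀ i j, A' i j = true → A i j = true) (h : Av A R C) : Av A' R C :=
  fun r1 h1 r2 h2 r3 h3 c1 g1 c2 g2 c3 g3 l1 l2 l3 l4 e1 e2 e3 =>
    h r1 h1 r2 h2 r3 h3 c1 g1 c2 g2 c3 g3 l1 l2 l3 l4 (hle _ _ e1) (hle _ _ e2) (hle _ _ e3)

lemma mem_onesSet {A : ℕ → ℕ → Bool} {R C : Finset ℕ} {p : ℕ × ℕ} :
    p ∈ (R ×ˢ C).filter (fun p => A p.1 p.2 = true) ↔ p.1 ∈ R ∧ p.2 ∈ C ∧ A p.1 p.2 = true := by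
  simp [Finset.mem_filter, Finset.mem_product, and_assoc]

lemma ones_le_mul (A : ℕ → ℕ → Bool) (R C : Finset ℕ) : ones A R C ≤ R.card * C.card := by
  calc ones A R C ≤ (R ×ˢ C).card := Finset.card_filter_le _ _
  _ = R.card * C.card := Finset.card_product R C

/-- if every one of `R×C` lies in `R'×C'` then the count drops. -/
lemma ones_drop {A : ℕ → ℕ → Bool} {R C R' C' : Finset ℕ}
    (h : ∀ i ∈ R, ∀ j ∈ C, A i j = true → i ∈ R' ∧ j ∈ C') :
    ones A R C ≤ ones A R' C' := by
  apply Finset.card_le_card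
  intro p hp
  rw [mem_onesSet] at hp ⊢
  obtain ⟨h1, h2, h3⟩ := hp
  exact ⟨(h _ h1 _ h2 h3).1, (h _ h1 _ h2 h3).2, h3⟩

/-- main covering inequality with one overlap cell credited back. -/
lemma cover2 {A : ℕ → ℕ → Bool} {R C R1 C1 R2 C2 : Finset ℕ} {x y : ℕ}
    (h : ∀ i ∈ R, ∀ j ∈ C, A i j = true → (i ∈ R1 ∧ j ∈ C1) ∨ (i ∈ R2 ∧ j ∈ C2))
    (hx1 : x ∈ R1) (hy1 : y ∈ C1) (hx2 : x ∈ R2) (hy2 : y ∈ C2) :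
    ones A R C + dd A x y ≤ ones A R1 C1 + ones A R2 C2 := by
  classical
  set s1 := (R1 ×ˢ C1).filter (fun p => A p.1 p.2 = true) with hs1
  set s2 := (R2 ×ˢ C2).filter (fun p => A p.1 p.2 = true) with hs2
  have hsub : (R ×ˢ C).filter (fun p => A p.1 p.2 = true) ⊆ s1 ∪ s2 := by
    intro p hp
    rw [mem_onesSet] at hp
    obtain ⟨h1, h2, h3⟩ := hp
    rcases h _ h1 _ h2 h3 with ⟨a1, a2⟩ | ⟨a1, a2⟩
    · exact Finset.mem_union_left _ (mem_onesSet.2 ⟨a1, a2, h3⟩)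
    · exact Finset.mem_union_right _ (mem_onesSet.2 ⟨a1, a2, h3⟩)
  have h1 : ones A R C ≤ (s1 ∪ s2).card := Finset.card_le_card hsub
  have h2 : dd A x y ≤ (s1 ∩ s2).card := by
    rcases hxy : A x y with hf | ht
    · rw [dd_eq_zero _ hxy]; omega
    · rw [dd_eq_one _ hxy]
      have : (x, y) ∈ s1 ∩ s2 := by
        rw [Finset.mem_inter]
        exact ⟨mem_onesSet.2 ⟨hx1, hy1, hxy⟩, mem_onesSet.2 ⟨hx2, hy2, hxy⟩⟩
      exact Finset.card_pos.2 ⟨_, this⟩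
  have h3 := Finset.card_union_add_card_inter s1 s2
  have e1 : ones A R1 C1 = s1.card := rfl
  have e2 : ones A R2 C2 = s2.card := rfl
  omega

lemma card_split {t1 t2 s : Finset ℕ} {x : ℕ} (h : t1 ∪ t2 = s) (h2 : t1 ∩ t2 = {x}) :
    t1.card + t2.card = s.card + 1 := by
  have := Finset.card_union_add_card_inter t1 t2
  rw [h, h2] at this
  simpa using this.symm

lemma min'_eq {s : Finset ℕ} (h : s.Nonempty) {x : ℕ} (hx : x ∈ s)
    (hlb : ∀ y ∈ s, x ≤ y) : s.min' h = x :=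
  le_antisymm (Finset.min'_le s x hx) (Finset.le_min' s h x hlb)

lemma max'_eq {s : Finset ℕ} (h : s.Nonempty) {x : ℕ} (hx : x ∈ s)
    (hub : ∀ y ∈ s, y ≤ x) : s.max' h = x :=
  le_antisymm (Finset.max'_le s h x hub) (Finset.le_max' s x hx)

/-- ones of a set inside two rows {x,y} and one column {z}. -/
lemma ones_le_pair_single {A : ℕ → ℕ → Bool} {R C : Finset ℕ} {x y z : ℕ}
    (hR : ∀ i ∈ R, i = x ∨ i = y) (hC : ∀ j ∈ C, j = z) :
    ones A R C ≤ dd A x z + dd A y z := by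
  classical
  have hsub : (R ×ˢ C).filter (fun p => A p.1 p.2 = true) ⊆
      ({(x, z), (y, z)} : Finset (ℕ × ℕ)).filter (fun p => A p.1 p.2 = true) := by
    intro p hp
    rw [mem_onesSet] at hp
    obtain ⟨h1, h2, h3⟩ := hp
    have := hC _ h2
    rcases hR _ h1 with h | h <;>
      · simp only [Finset.mem_filter, Finset.mem_insert, Finset.mem_singleton]
        constructor
        · first
          | exact Or.inl (Prod.ext h this)
          | exact Or.inr (Prod.ext h this)
        · exact h3
  have h1 : ones A R C ≤ (({(x, z), (y, z)} : Finset (ℕ × ℕ)).filter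
      (fun p => A p.1 p.2 = true)).card := Finset.card_le_card hsub
  have h2 : (({(x, z), (y, z)} : Finset (ℕ × ℕ)).filter (fun p => A p.1 p.2 = true)).card
      ≤ dd A x z + dd A y z := by
    rcases hxz : A x z with _ | _ <;> rcases hyz : A y z with _ | _ <;>
      simp [Finset.filter_insert, Finset.filter_singleton, hxz, hyz, dd,
        Finset.card_insert_le]
    · exact Finset.card_insert_le _ _
  omega

/-- ones of a set inside one row {x} and two columns {z,w}. -/
lemma ones_le_single_pair {A : ℕ → ℕ → Bool} {R C : Finset ℕ} {x z w : ℕ}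
    (hR : ∀ i ∈ R, i = x) (hC : ∀ j ∈ C, j = z ∨ j = w) :
    ones A R C ≤ dd A x z + dd A x w := by
  classical
  have hsub : (R ×ˢ C).filter (fun p => A p.1 p.2 = true) ⊆
      ({(x, z), (x, w)} : Finset (ℕ × ℕ)).filter (fun p => A p.1 p.2 = true) := by
    intro p hp
    rw [mem_onesSet] at hp
    obtain ⟨h1, h2, h3⟩ := hp
    have := hR _ h1
    rcases hC _ h2 with h | h <;>
      · simp only [Finset.mem_filter, Finset.mem_insert, Finset.mem_singleton]
        constructor
        · first
          | exact Or.inl (Prod.ext this h)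
          | exact Or.inr (Prod.ext this h)
        · exact h3
  have h1 : ones A R C ≤ (({(x, z), (x, w)} : Finset (ℕ × ℕ)).filter
      (fun p => A p.1 p.2 = true)).card := Finset.card_le_card hsub
  have h2 : (({(x, z), (x, w)} : Finset (ℕ × ℕ)).filter (fun p => A p.1 p.2 = true)).card
      ≤ dd A x z + dd A x w := by
    rcases hxz : A x z with _ | _ <;> rcases hyz : A x w with _ | _ <;>
      simp [Finset.filter_insert, Finset.filter_singleton, hxz, hyz, dd,
        Finset.card_insert_le]
    · exact Finset.card_insert_le _ _
  omega

/-- generic corner-counting: ones + (number of prescribed zero cells) ≤ total cells. -/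
lemma corner_count {A : ℕ → ℕ → Bool} {R C : Finset ℕ} (X : Finset (ℕ × ℕ))
    (hX : ∀ p ∈ X, p.1 ∈ R ∧ p.2 ∈ C ∧ A p.1 p.2 = false) :
    ones A R C + X.card ≤ R.card * C.card := by
  classical
  have hdisj : Disjoint ((R ×ˢ C).filter (fun p => A p.1 p.2 = true)) X := by
    rw [Finset.disjoint_right]
    intro p hp hp2
    rw [mem_onesSet] at hp2
    have := (hX p hp).2.2
    rw [this] at hp2
    exact absurd hp2.2.2 (by simp)
  have hsub : ((R ×ˢ C).filter (fun p => A p.1 p.2 = true)) ∪ X ⊆ R ×ˢ C := by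
    apply Finset.union_subset (Finset.filter_subset _ _)
    intro p hp
    rw [Finset.mem_product]
    exact ⟨(hX p hp).1, (hX p hp).2.1⟩
  calc ones A R C + X.card = (((R ×ˢ C).filter (fun p => A p.1 p.2 = true)) ∪ X).card := by
        rw [Finset.card_union_of_disjoint hdisj]; rfl
  _ ≤ (R ×ˢ C).card := Finset.card_le_card hsub
  _ = R.card * C.card := Finset.card_product R C

end P13

namespace P13

lemma corner2_bound {A : ℕ → ℕ → Bool} {R C : Finset ℕ} (x1 x2 : ℕ × ℕ) (h12 : x1 ≠ x2)
    (m1 : x1.1 ∈ R ∧ x1.2 ∈ C) (m2 : x2.1 ∈ R ∧ x2.2 ∈ C) :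
    ones A R C + 2 ≤ R.card * C.card + dd A x1.1 x1.2 + dd A x2.1 x2.2 := by
  classical
  rcases h1 : A x1.1 x1.2 with _ | _ <;> rcases h2 : A x2.1 x2.2 with _ | _
  · have := corner_count (A := A) (R := R) (C := C) {x1, x2} (by
      intro p hp
      rcases Finset.mem_insert.1 hp with h | h
      · subst h; exact ⟨m1.1, m1.2, h1⟩
      · rw [Finset.mem_singleton] at h; subst h; exact ⟨m2.1, m2.2, h2⟩)
    have hc : ({x1, x2} : Finset (ℕ × ℕ)).card = 2 := Finset.card_pair h12
    rw [dd_eq_zero _ h1, dd_eq_zero _ h2]; omega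
  · have := corner_count (A := A) (R := R) (C := C) {x1} (by
      intro p hp
      rw [Finset.mem_singleton] at hp; subst hp; exact ⟨m1.1, m1.2, h1⟩)
    have hc : ({x1} : Finset (ℕ × ℕ)).card = 1 := Finset.card_singleton _
    rw [dd_eq_zero _ h1, dd_eq_one _ h2]; omega
  · have := corner_count (A := A) (R := R) (C := C) {x2} (by
      intro p hp
      rw [Finset.mem_singleton] at hp; subst hp; exact ⟨m2.1, m2.2, h2⟩)
    have hc : ({x2} : Finset (ℕ × ℕ)).card = 1 := Finset.card_singleton _
    rw [dd_eq_one _ h1, dd_eq_zero _ h2]; omega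
  · have h3 : ones A R C ≤ R.card * C.card := ones_le_mul _ _ _
    rw [dd_eq_one _ h1, dd_eq_one _ h2]; omega

lemma corner3_bound {A : ℕ → ℕ → Bool} {R C : Finset ℕ} (x1 x2 x3 : ℕ × ℕ)
    (h12 : x1 ≠ x2) (h13 : x1 ≠ x3) (h23 : x2 ≠ x3)
    (m1 : x1.1 ∈ R ∧ x1.2 ∈ C) (m2 : x2.1 ∈ R ∧ x2.2 ∈ C) (m3 : x3.1 ∈ R ∧ x3.2 ∈ C) :
    ones A R C + 3 ≤ R.card * C.card + dd A x1.1 x1.2 + dd A x2.1 x2.2 + dd A x3.1 x3.2 := by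
  classical
  rcases h1 : A x1.1 x1.2 with _ | _
  · -- x1 is a zero; combine corner2 on x2,x3 with an extra zero cell x1
    have hcc := corner_count (A := A) (R := R) (C := C) {x1} (by
      intro p hp
      rw [Finset.mem_singleton] at hp; subst hp; exact ⟨m1.1, m1.2, h1⟩)
    -- we need a sharper argument: do full case analysis on x2, x3 instead
    rcases h2 : A x2.1 x2.2 with _ | _ <;> rcases h3 : A x3.1 x3.2 with _ | _
    · have := corner_count (A := A) (R := R) (C := C) {x1, x2, x3} (by
        intro p hp
        rcases Finset.mem_insert.1 hp with h | h
        · subst h; exact ⟨m1.1, m1.2, h1⟩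
        rcases Finset.mem_insert.1 h with h | h
        · subst h; exact ⟨m2.1, m2.2, h2⟩
        · rw [Finset.mem_singleton] at h; subst h; exact ⟨m3.1, m3.2, h3⟩)
      have hc : ({x1, x2, x3} : Finset (ℕ × ℕ)).card = 3 := by
        rw [Finset.card_insert_of_notMem (by simp [h12, h13]), Finset.card_pair h23]
      rw [dd_eq_zero _ h1, dd_eq_zero _ h2, dd_eq_zero _ h3]; omega
    · have := corner_count (A := A) (R := R) (C := C) {x1, x2} (by
        intro p hp
        rcases Finset.mem_insert.1 hp with h | h
        · subst h; exact ⟨m1.1, m1.2, h1⟩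
        · rw [Finset.mem_singleton] at h; subst h; exact ⟨m2.1, m2.2, h2⟩)
      have hc : ({x1, x2} : Finset (ℕ × ℕ)).card = 2 := Finset.card_pair h12
      rw [dd_eq_zero _ h1, dd_eq_zero _ h2, dd_eq_one _ h3]; omega
    · have := corner_count (A := A) (R := R) (C := C) {x1, x3} (by
        intro p hp
        rcases Finset.mem_insert.1 hp with h | h
        · subst h; exact ⟨m1.1, m1.2, h1⟩
        · rw [Finset.mem_singleton] at h; subst h; exact ⟨m3.1, m3.2, h3⟩)
      have hc : ({x1, x3} : Finset (ℕ × ℕ)).card = 2 := Finset.card_pair h13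
      rw [dd_eq_zero _ h1, dd_eq_one _ h2, dd_eq_zero _ h3]; omega
    · have := corner_count (A := A) (R := R) (C := C) {x1} (by
        intro p hp
        rw [Finset.mem_singleton] at hp; subst hp; exact ⟨m1.1, m1.2, h1⟩)
      have hc : ({x1} : Finset (ℕ × ℕ)).card = 1 := Finset.card_singleton _
      rw [dd_eq_zero _ h1, dd_eq_one _ h2, dd_eq_one _ h3]; omega
  · have := corner2_bound (A := A) (R := R) (C := C) x2 x3 h23 m2 m3
    rw [dd_eq_one _ h1]; omega

end P13


namespace P13

open Finset

theorem main (μ : ℕ) : ∀ (A : ℕ → ℕ → Bool) (R C : Finset ℕ) (hR : R.Nonempty) (hC : C.Nonempty),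
    Av A R C → 4 ≤ R.card + C.card → (R.card + C.card)^3 + ones A R C ≤ μ →
    ones A R C + 7 ≤ 2*(R.card + C.card) + dd A (R.max' hR) (C.min' hC)
      + dd A (R.min' hR) (C.min' hC) + dd A (R.max' hR) (C.max' hC) := by
  induction μ using Nat.strong_induction_on with
  | _ μ IH =>
  intro A R C hR hC hAv hk hμ
  -- recursion helper
  have rec0 : ∀ (A' : ℕ → ℕ → Bool) (R' C' : Finset ℕ) (hR' : R'.Nonempty) (hC' : C'.Nonempty),
      Av A' R' C' → 4 ≤ R'.card + C'.card →
      (R'.card + C'.card)^3 + ones A' R' C' < (R.card + C.card)^3 + ones A R C →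
      ones A' R' C' + 7 ≤ 2*(R'.card + C'.card) + dd A' (R'.max' hR') (C'.min' hC')
        + dd A' (R'.min' hR') (C'.min' hC') + dd A' (R'.max' hR') (C'.max' hC') := by
    intro A' R' C' hR' hC' h1 h2 h3
    exact IH _ (lt_of_lt_of_le h3 hμ) A' R' C' hR' hC' h1 h2 le_rfl
  have meas : ∀ (A' : ℕ → ℕ → Bool) (R' C' : Finset ℕ),
      R'.card + C'.card < R.card + C.card →
      (R'.card + C'.card)^3 + ones A' R' C' < (R.card + C.card)^3 + ones A R C := by
    intro A' R' C' hlt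
    have h1 : ones A' R' C' ≤ R'.card * C'.card := ones_le_mul _ _ _
    have h2 : R'.card * C'.card ≤ (R'.card + C'.card)^2 := by nlinarith
    have h4 : (R'.card + C'.card + 1)^3 ≤ (R.card + C.card)^3 :=
      Nat.pow_le_pow_left hlt 3
    have h5 : (R'.card + C'.card + 1)^3
        = (R'.card + C'.card)^3 + 3*(R'.card + C'.card)^2 + 3*(R'.card + C'.card) + 1 := by
      ring
    have h3 : (R'.card + C'.card)^3 + (R'.card + C'.card)^2 < (R.card + C.card)^3 := by
      nlinarith [h4, h5]
    omega
  -- recursion for strictly smaller index sets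
  have rec1 : ∀ (R' C' : Finset ℕ) (hR' : R'.Nonempty) (hC' : C'.Nonempty),
      R' ⊆ R → C' ⊆ C → 4 ≤ R'.card + C'.card → R'.card + C'.card < R.card + C.card →
      ones A R' C' + 7 ≤ 2*(R'.card + C'.card) + dd A (R'.max' hR') (C'.min' hC')
        + dd A (R'.min' hR') (C'.min' hC') + dd A (R'.max' hR') (C'.max' hC') := by
    intro R' C' hR' hC' hsubR hsubC h4 hlt
    exact rec0 A R' C' hR' hC' (av_mono hAv hsubR hsubC) h4 (meas A R' C' hlt)
  set rmin := R.min' hR with hrmin_def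
  set rmax := R.max' hR with hrmax_def
  set cmin := C.min' hC with hcmin_def
  set cmax := C.max' hC with hcmax_def
  have hrminR : rmin ∈ R := Finset.min'_mem R hR
  have hrmaxR : rmax ∈ R := Finset.max'_mem R hR
  have hcminC : cmin ∈ C := Finset.min'_mem C hC
  have hcmaxC : cmax ∈ C := Finset.max'_mem C hC
  have hrlb : ∀ i ∈ R, rmin ≤ i := fun i hi => Finset.min'_le R i hi
  have hrub : ∀ i ∈ R, i ≤ rmax := fun i hi => Finset.le_max' R i hi
  have hclb : ∀ j ∈ C, cmin ≤ j := fun j hj => Finset.min'_le C j hj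
  have hcub : ∀ j ∈ C, j ≤ cmax := fun j hj => Finset.le_max' C j hj
  have haR : 1 ≤ R.card := Finset.card_pos.2 hR
  have hbC : 1 ≤ C.card := Finset.card_pos.2 hC
  by_cases ha1 : R.card = 1
  · -- BASE a = 1
    have hb3 : 3 ≤ C.card := by omega
    have hcmm : cmin < cmax := Finset.min'_lt_max'_of_card C (by omega)
    have hmm : rmax = rmin := by
      obtain ⟨x, hx⟩ := Finset.card_eq_one.1 ha1
      have h1 := hrminR; have h2 := hrmaxR
      rw [hx, Finset.mem_singleton] at h1 h2
      rw [h1, h2]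
    have hne : ((rmin : ℕ), cmin) ≠ (rmin, cmax) := by
      intro h
      exact absurd (congrArg Prod.snd h) (by simp; omega)
    have hcb := corner2_bound (A := A) (R := R) (C := C) (rmin, cmin) (rmin, cmax) hne
      ⟨hrminR, hcminC⟩ ⟨hrminR, hcmaxC⟩
    simp only at hcb
    rw [hmm, ha1] at *
    have d1 := dd_le_one A rmin cmin
    have d2 := dd_le_one A rmin cmax
    omega
  by_cases hb1 : C.card = 1
  · -- BASE b = 1
    have ha3 : 3 ≤ R.card := by omega
    have hrmm : rmin < rmax := Finset.min'_lt_max'_of_card R (by omega)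
    have hmm : cmax = cmin := by
      obtain ⟨x, hx⟩ := Finset.card_eq_one.1 hb1
      have h1 := hcminC; have h2 := hcmaxC
      rw [hx, Finset.mem_singleton] at h1 h2
      rw [h1, h2]
    have hne : ((rmin : ℕ), cmin) ≠ (rmax, cmin) := by
      intro h
      exact absurd (congrArg Prod.fst h) (by simp; omega)
    have hcb := corner2_bound (A := A) (R := R) (C := C) (rmin, cmin) (rmax, cmin) hne
      ⟨hrminR, hcminC⟩ ⟨hrmaxR, hcminC⟩
    simp only at hcb
    rw [hmm, hb1] at *
    have d1 := dd_le_one A rmin cmin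
    have d2 := dd_le_one A rmax cmin
    omega
  -- now a,b ≥ 2
  have ha2 : 2 ≤ R.card := by omega
  have hb2 : 2 ≤ C.card := by omega
  have hrminmax : rmin < rmax := Finset.min'_lt_max'_of_card R (by omega)
  have hcminmax : cmin < cmax := Finset.min'_lt_max'_of_card C (by omega)
  by_cases hab2 : R.card = 2 ∨ C.card = 2
  · -- BASE a = 2 or b = 2
    have hne12 : ((rmax : ℕ), cmin) ≠ (rmin, cmin) := by
      intro h; exact absurd (congrArg Prod.fst h) (by simp; omega)
    have hne13 : ((rmax : ℕ), cmin) ≠ (rmax, cmax) := by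
      intro h; exact absurd (congrArg Prod.snd h) (by simp; omega)
    have hne23 : ((rmin : ℕ), cmin) ≠ (rmax, cmax) := by
      intro h; exact absurd (congrArg Prod.fst h) (by simp; omega)
    have hcb := corner3_bound (A := A) (R := R) (C := C) (rmax, cmin) (rmin, cmin) (rmax, cmax)
      hne12 hne13 hne23 ⟨hrmaxR, hcminC⟩ ⟨hrminR, hcminC⟩ ⟨hrmaxR, hcmaxC⟩
    simp only at hcb
    have hmul : R.card * C.card + 4 ≤ 2 * (R.card + C.card) := by
      rcases hab2 with h | h <;> rw [h] <;> omega
    omega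
  have ha3 : 3 ≤ R.card := by omega
  have hb3 : 3 ≤ C.card := by omega
  -- the first column
  by_cases hcol : (R.filter (fun i => A i cmin = true)).Nonempty
  case neg =>
    -- DROP first column (empty)
    set C' := C.erase cmin with hC'_def
    have hcard' : C'.card = C.card - 1 := Finset.card_erase_of_mem hcminC
    have hC' : C'.Nonempty := Finset.card_pos.1 (by omega)
    have hsubC : C' ⊆ C := Finset.erase_subset _ _
    have hdrop : ones A R C ≤ ones A R C' := by
      apply ones_drop
      intro i hi j hj hA
      refine ⟨hi, Finset.mem_erase.2 ⟨?_, hj⟩⟩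
      intro hEq
      exact hcol ⟨i, Finset.mem_filter.2 ⟨hi, hEq ▸ hA⟩⟩
    have hrec := rec1 R C' hR hC' (Finset.Subset.refl _) hsubC (by omega) (by omega)
    rw [← hrmax_def, ← hrmin_def] at hrec
    have hmax' : C'.max' hC' = cmax := by
      apply max'_eq
      · exact Finset.mem_erase.2 ⟨by omega, hcmaxC⟩
      · intro y hy; exact hcub y (hsubC hy)
    rw [hmax'] at hrec
    have d1 := dd_le_one A rmax (C'.min' hC')
    have d2 := dd_le_one A rmin (C'.min' hC')
    have d3 := dd_le_one A rmax cmax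
    omega
  case pos =>
  set w0 := (R.filter (fun i => A i cmin = true)).min' hcol with hw0_def
  have hw0mem : w0 ∈ R.filter (fun i => A i cmin = true) := Finset.min'_mem _ _
  have hw0R : w0 ∈ R := (Finset.mem_filter.1 hw0mem).1
  have hw0A : A w0 cmin = true := (Finset.mem_filter.1 hw0mem).2
  have hw0top : ∀ i ∈ R, A i cmin = true → w0 ≤ i := by
    intro i hi hAi
    exact Finset.min'_le _ i (Finset.mem_filter.2 ⟨hi, hAi⟩)
  -- the last row
  by_cases hrow : (C.filter (fun j => A rmax j = true)).Nonempty
  case neg =>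
    -- DROP last row (empty)
    set R' := R.erase rmax with hR'_def
    have hcard' : R'.card = R.card - 1 := Finset.card_erase_of_mem hrmaxR
    have hR' : R'.Nonempty := Finset.card_pos.1 (by omega)
    have hsubR : R' ⊆ R := Finset.erase_subset _ _
    have hdrop : ones A R C ≤ ones A R' C := by
      apply ones_drop
      intro i hi j hj hA
      refine ⟨Finset.mem_erase.2 ⟨?_, hi⟩, hj⟩
      intro hEq
      exact hrow ⟨j, Finset.mem_filter.2 ⟨hj, hEq ▸ hA⟩⟩
    have hrec := rec1 R' C hR' hC hsubR (Finset.Subset.refl _) (by omega) (by omega)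
    rw [← hcmax_def, ← hcmin_def] at hrec
    have hmin' : R'.min' hR' = rmin := by
      apply min'_eq
      · exact Finset.mem_erase.2 ⟨by omega, hrminR⟩
      · intro y hy; exact hrlb y (hsubR hy)
    rw [hmin'] at hrec
    have d1 := dd_le_one A (R'.max' hR') cmin
    have d2 := dd_le_one A rmin cmin
    have d3 := dd_le_one A (R'.max' hR') cmax
    omega
  case pos =>
  set g0 := (C.filter (fun j => A rmax j = true)).max' hrow with hg0_def
  have hg0mem : g0 ∈ C.filter (fun j => A rmax j = true) := Finset.max'_mem _ _
  have hg0C : g0 ∈ C := (Finset.mem_filter.1 hg0mem).1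
  have hg0A : A rmax g0 = true := (Finset.mem_filter.1 hg0mem).2
  have hg0right : ∀ j ∈ C, A rmax j = true → j ≤ g0 := by
    intro j hj hAj
    exact Finset.le_max' _ j (Finset.mem_filter.2 ⟨hj, hAj⟩)
  -- ones above w0
  by_cases habv : ((R ×ˢ C).filter (fun p => p.1 < w0 ∧ A p.1 p.2 = true)).Nonempty
  case pos =>
    -- CASE 5a : main split at top of first column
    set abv := (R ×ˢ C).filter (fun p => p.1 < w0 ∧ A p.1 p.2 = true) with habv_def
    have hmem_abv : ∀ i j : ℕ, (i, j) ∈ abv ↔ i ∈ R ∧ j ∈ C ∧ i < w0 ∧ A i j = true := by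
      intro i j
      rw [habv_def, Finset.mem_filter, Finset.mem_product]
      constructor
      · rintro ⟨⟨h1, h2⟩, h3, h4⟩; exact ⟨h1, h2, h3, h4⟩
      · rintro ⟨h1, h2, h3, h4⟩; exact ⟨⟨h1, h2⟩, h3, h4⟩
    have himg : (abv.image Prod.snd).Nonempty := habv.image _
    set a0 := (abv.image Prod.snd).max' himg with ha0_def
    have ha0mem : a0 ∈ abv.image Prod.snd := Finset.max'_mem _ _
    obtain ⟨⟨i0, j0⟩, hi0mem, hj0⟩ := Finset.mem_image.1 ha0mem
    simp only at hj0
    rw [hmem_abv] at hi0mem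
    have hi0R : i0 ∈ R := hi0mem.1
    have hi0lt : i0 < w0 := hi0mem.2.2.1
    have ha0C : a0 ∈ C := hj0 ▸ hi0mem.2.1
    have hA0 : A i0 a0 = true := hj0 ▸ hi0mem.2.2.2
    have hub_above : ∀ i ∈ R, i < w0 → ∀ j ∈ C, A i j = true → j ≤ a0 := by
      intro i hi hlt j hj hA
      exact Finset.le_max' _ j (Finset.mem_image.2
        ⟨(i, j), (hmem_abv i j).2 ⟨hi, hj, hlt, hA⟩, rfl⟩)
    have hcm_lt_a0 : cmin < a0 := by
      rcases eq_or_lt_of_le (hclb a0 ha0C) with hEq | h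
      · exfalso
        have := hw0top i0 hi0R (by rw [← hEq] at hA0; exact hA0)
        omega
      · exact h
    have hrmin_lt_w0 : rmin < w0 := lt_of_le_of_lt (hrlb i0 hi0R) hi0lt
    have hclaim : ∀ i ∈ R, w0 < i → ∀ j ∈ C, A i j = true → cmin < j → a0 ≤ j := by
      intro i hi hlt j hj hA hcj
      by_contra hja
      push_neg at hja
      exact hAv i0 hi0R w0 hw0R i hi cmin hcminC j hj a0 ha0C hi0lt hlt hcj hja hA0 hw0A hA
    set R1 := R.filter (fun i => i ≤ w0) with hR1_def
    set C1 := C.filter (fun j => cmin < j ∧ j ≤ a0) with hC1_def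
    set R2 := R.filter (fun i => w0 ≤ i) with hR2_def
    set C2 := C.filter (fun j => j = cmin ∨ a0 ≤ j) with hC2_def
    have hw0R1 : w0 ∈ R1 := Finset.mem_filter.2 ⟨hw0R, le_refl _⟩
    have ha0C1 : a0 ∈ C1 := Finset.mem_filter.2 ⟨ha0C, hcm_lt_a0, le_refl _⟩
    have hw0R2 : w0 ∈ R2 := Finset.mem_filter.2 ⟨hw0R, le_refl _⟩
    have ha0C2 : a0 ∈ C2 := Finset.mem_filter.2 ⟨ha0C, Or.inr (le_refl _)⟩
    have hcminC2 : cmin ∈ C2 := Finset.mem_filter.2 ⟨hcminC, Or.inl rfl⟩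
    have hcmaxC2 : cmax ∈ C2 := Finset.mem_filter.2 ⟨hcmaxC, Or.inr (hcub a0 ha0C)⟩
    have hrminR1 : rmin ∈ R1 := Finset.mem_filter.2 ⟨hrminR, le_of_lt hrmin_lt_w0⟩
    have hrmaxR2 : rmax ∈ R2 := Finset.mem_filter.2 ⟨hrmaxR, hrub w0 hw0R⟩
    have hn1 : R1.Nonempty := ⟨w0, hw0R1⟩
    have hn2 : C1.Nonempty := ⟨a0, ha0C1⟩
    have hn3 : R2.Nonempty := ⟨w0, hw0R2⟩
    have hn4 : C2.Nonempty := ⟨cmin, hcminC2⟩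
    have hRsplit : R1.card + R2.card = R.card + 1 := by
      apply card_split (x := w0)
      · ext i
        simp only [Finset.mem_union, hR1_def, hR2_def, Finset.mem_filter]
        constructor
        · rintro (⟨h, _⟩ | ⟨h, _⟩) <;> exact h
        · intro h
          rcases le_total i w0 with h1 | h1
          · exact Or.inl ⟨h, h1⟩
          · exact Or.inr ⟨h, h1⟩
      · ext i
        simp only [Finset.mem_inter, hR1_def, hR2_def, Finset.mem_filter, Finset.mem_singleton]
        constructor
        · rintro ⟨⟨h1, h2⟩, ⟨h3, h4⟩⟩; omega
        · rintro rfl; exact ⟨⟨hw0R, le_refl _⟩, ⟨hw0R, le_refl _⟩⟩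
    have hCsplit : C1.card + C2.card = C.card + 1 := by
      apply card_split (x := a0)
      · ext j
        simp only [Finset.mem_union, hC1_def, hC2_def, Finset.mem_filter]
        constructor
        · rintro (⟨h, _⟩ | ⟨h, _⟩) <;> exact h
        · intro h
          rcases eq_or_lt_of_le (hclb j h) with h1 | h1
          · exact Or.inr ⟨h, Or.inl h1.symm⟩
          · rcases le_total j a0 with h2 | h2
            · exact Or.inl ⟨h, h1, h2⟩
            · exact Or.inr ⟨h, Or.inr h2⟩
      · ext j
        simp only [Finset.mem_inter, hC1_def, hC2_def, Finset.mem_filter, Finset.mem_singleton]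
        constructor
        · rintro ⟨⟨h1, h2, h3⟩, ⟨h4, h5 | h5⟩⟩ <;> omega
        · rintro rfl
          exact ⟨⟨ha0C, hcm_lt_a0, le_refl _⟩, ⟨ha0C, Or.inr (le_refl _)⟩⟩
    have hp2 : 2 ≤ R1.card := by
      have hsub : ({rmin, w0} : Finset ℕ) ⊆ R1 := by
        intro x hx
        rcases Finset.mem_insert.1 hx with h | h
        · subst h; exact hrminR1
        · rw [Finset.mem_singleton] at h; subst h; exact hw0R1
      calc 2 = ({rmin, w0} : Finset ℕ).card := (Finset.card_pair (by omega)).symm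
      _ ≤ R1.card := Finset.card_le_card hsub
    have hq1 : 1 ≤ C1.card := Finset.card_pos.2 hn2
    have hr2c : 1 ≤ R2.card := Finset.card_pos.2 hn3
    have hc2c : 2 ≤ C2.card := by
      have hsub : ({cmin, cmax} : Finset ℕ) ⊆ C2 := by
        intro x hx
        rcases Finset.mem_insert.1 hx with h | h
        · subst h; exact hcminC2
        · rw [Finset.mem_singleton] at h; subst h; exact hcmaxC2
      calc 2 = ({cmin, cmax} : Finset ℕ).card := (Finset.card_pair (by omega)).symm
      _ ≤ C2.card := Finset.card_le_card hsub
    have hq_le : C1.card ≤ C.card - 1 := by omega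
    have hp_le : R1.card ≤ R.card := Finset.card_le_card (Finset.filter_subset _ _)
    have hcover : ∀ i ∈ R, ∀ j ∈ C, A i j = true → (i ∈ R1 ∧ j ∈ C1) ∨ (i ∈ R2 ∧ j ∈ C2) := by
      intro i hi j hj hA
      rcases lt_trichotomy i w0 with hlt | heq | hgt
      · left
        refine ⟨Finset.mem_filter.2 ⟨hi, le_of_lt hlt⟩,
          Finset.mem_filter.2 ⟨hj, ?_, hub_above i hi hlt j hj hA⟩⟩
        rcases eq_or_lt_of_le (hclb j hj) with hEq | h
        · exfalso
          have := hw0top i hi (by rw [← hEq] at hA; exact hA)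
          omega
        · exact h
      · subst heq
        by_cases hj1 : j = cmin
        · exact Or.inr ⟨hw0R2, Finset.mem_filter.2 ⟨hj, Or.inl hj1⟩⟩
        by_cases hj2 : a0 ≤ j
        · exact Or.inr ⟨hw0R2, Finset.mem_filter.2 ⟨hj, Or.inr hj2⟩⟩
        · left
          refine ⟨hw0R1, Finset.mem_filter.2 ⟨hj, ?_, by omega⟩⟩
          exact lt_of_le_of_ne (hclb j hj) (fun h => hj1 h.symm)
      · by_cases hj1 : j = cmin
        · exact Or.inr ⟨Finset.mem_filter.2 ⟨hi, le_of_lt hgt⟩,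
            Finset.mem_filter.2 ⟨hj, Or.inl hj1⟩⟩
        · have hcj : cmin < j := lt_of_le_of_ne (hclb j hj) (fun h => hj1 h.symm)
          exact Or.inr ⟨Finset.mem_filter.2 ⟨hi, le_of_lt hgt⟩,
            Finset.mem_filter.2 ⟨hj, Or.inr (hclaim i hi hgt j hj hA hcj)⟩⟩
    have hcov := cover2 hcover hw0R1 ha0C1 hw0R2 ha0C2
    have hR1max : R1.max' hn1 = w0 :=
      max'_eq hn1 hw0R1 (fun y hy => (Finset.mem_filter.1 hy).2)
    have hR1min : R1.min' hn1 = rmin :=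
      min'_eq hn1 hrminR1 (fun y hy => hrlb y (Finset.filter_subset _ _ hy))
    have hC1max : C1.max' hn2 = a0 :=
      max'_eq hn2 ha0C1 (fun y hy => (Finset.mem_filter.1 hy).2.2)
    have hR2min : R2.min' hn3 = w0 :=
      min'_eq hn3 hw0R2 (fun y hy => (Finset.mem_filter.1 hy).2)
    have hR2max : R2.max' hn3 = rmax :=
      max'_eq hn3 hrmaxR2 (fun y hy => hrub y (Finset.filter_subset _ _ hy))
    have hC2min : C2.min' hn4 = cmin :=
      min'_eq hn4 hcminC2 (fun y hy => hclb y (Finset.filter_subset _ _ hy))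
    have hC2max : C2.max' hn4 = cmax :=
      max'_eq hn4 hcmaxC2 (fun y hy => hcub y (Finset.filter_subset _ _ hy))
    by_cases hT4 : 4 ≤ R1.card + C1.card
    · by_cases hB4 : 4 ≤ R2.card + C2.card
      · -- generic double recursion
        have ih1 := rec1 R1 C1 hn1 hn2 (Finset.filter_subset _ _) (Finset.filter_subset _ _)
          hT4 (by omega)
        have ih2 := rec1 R2 C2 hn3 hn4 (Finset.filter_subset _ _) (Finset.filter_subset _ _)
          hB4 (by omega)
        rw [hR1max, hR1min, hC1max] at ih1
        rw [hR2min, hR2max, hC2min, hC2max] at ih2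
        rw [dd_eq_one A hw0A] at ih2
        have d1 := dd_le_one A w0 (C1.min' hn2)
        have d2 := dd_le_one A rmin (C1.min' hn2)
        have d3 := dd_le_one A rmin cmin
        omega
      · -- small B : R2 = {rmax}, C2 = {cmin, cmax}
        have h1 : R2.card = 1 ∧ C2.card = 2 := by omega
        have hR2eq : ∀ i ∈ R2, i = rmax := by
          intro i hi
          obtain ⟨x, hx⟩ := Finset.card_eq_one.1 h1.1
          have e1 : i = x := by rw [hx, Finset.mem_singleton] at hi; exact hi
          have e2 : rmax = x := by
            have := hrmaxR2; rw [hx, Finset.mem_singleton] at this; exact this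
          omega
        have hC2eq : ∀ j ∈ C2, j = cmin ∨ j = cmax := by
          have hsub : ({cmin, cmax} : Finset ℕ) ⊆ C2 := by
            intro x hx
            rcases Finset.mem_insert.1 hx with h | h
            · subst h; exact hcminC2
            · rw [Finset.mem_singleton] at h; subst h; exact hcmaxC2
          have heq := Finset.eq_of_subset_of_card_le hsub
            (by rw [Finset.card_pair (by omega : cmin ≠ cmax)]; omega)
          intro j hj
          rw [← heq] at hj
          rcases Finset.mem_insert.1 hj with h | h
          · exact Or.inl h
          · exact Or.inr (Finset.mem_singleton.1 h)
        have honesB : ones A R2 C2 ≤ dd A rmax cmin + dd A rmax cmax :=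
          ones_le_single_pair hR2eq hC2eq
        have hw0max : w0 = rmax := hR2eq w0 hw0R2
        have ih1 := rec1 R1 C1 hn1 hn2 (Finset.filter_subset _ _) (Finset.filter_subset _ _)
          (by omega) (by omega)
        rw [hR1max, hR1min, hC1max] at ih1
        have d1 := dd_le_one A w0 (C1.min' hn2)
        have d2 := dd_le_one A rmin (C1.min' hn2)
        have d3 := dd_le_one A rmin cmin
        omega
    · -- small T : R1 = {rmin, w0}, C1 = {a0}
      have h1 : R1.card = 2 ∧ C1.card = 1 := by omega
      have hC1eq : ∀ j ∈ C1, j = a0 := by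
        intro j hj
        obtain ⟨x, hx⟩ := Finset.card_eq_one.1 h1.2
        have e1 : j = x := by rw [hx, Finset.mem_singleton] at hj; exact hj
        have e2 : a0 = x := by
          have := ha0C1; rw [hx, Finset.mem_singleton] at this; exact this
        omega
      have hR1eq : ∀ i ∈ R1, i = rmin ∨ i = w0 := by
        have hsub : ({rmin, w0} : Finset ℕ) ⊆ R1 := by
          intro x hx
          rcases Finset.mem_insert.1 hx with h | h
          · subst h; exact hrminR1
          · rw [Finset.mem_singleton] at h; subst h; exact hw0R1
        have heq := Finset.eq_of_subset_of_card_le hsub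
          (by rw [Finset.card_pair (by omega : rmin ≠ w0)]; omega)
        intro i hi
        rw [← heq] at hi
        rcases Finset.mem_insert.1 hi with h | h
        · exact Or.inl h
        · exact Or.inr (Finset.mem_singleton.1 h)
      have honesT : ones A R1 C1 ≤ dd A rmin a0 + dd A w0 a0 :=
        ones_le_pair_single hR1eq hC1eq
      have ih2 := rec1 R2 C2 hn3 hn4 (Finset.filter_subset _ _) (Finset.filter_subset _ _)
        (by omega) (by omega)
      rw [hR2min, hR2max, hC2min, hC2max] at ih2
      rw [dd_eq_one A hw0A] at ih2
      have d0 := dd_le_one A rmin a0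
      have d3 := dd_le_one A rmin cmin
      omega
  case neg =>
  have hnoabove : ∀ i ∈ R, i < w0 → ∀ j ∈ C, A i j = true → False := by
    intro i hi hlt j hj hA
    exact habv ⟨(i, j), Finset.mem_filter.2 ⟨Finset.mem_product.2 ⟨hi, hj⟩, hlt, hA⟩⟩
  by_cases hwr : w0 = rmin
  case neg =>
    -- DROP empty rows above w0
    have hrw : rmin < w0 := lt_of_le_of_ne (hrlb w0 hw0R) (fun h => hwr h.symm)
    set R' := R.filter (fun i => w0 ≤ i) with hR'_def
    have hw0R' : w0 ∈ R' := Finset.mem_filter.2 ⟨hw0R, le_refl _⟩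
    have hR' : R'.Nonempty := ⟨w0, hw0R'⟩
    have hsubR : R' ⊆ R := Finset.filter_subset _ _
    have hcard' : R'.card ≤ R.card - 1 := by
      have : R' ⊆ R.erase rmin := by
        intro i hi
        have h1 := Finset.mem_filter.1 hi
        exact Finset.mem_erase.2 ⟨by omega, h1.1⟩
      calc R'.card ≤ (R.erase rmin).card := Finset.card_le_card this
      _ = R.card - 1 := Finset.card_erase_of_mem hrminR
    have hR'1 : 1 ≤ R'.card := Finset.card_pos.2 hR'
    have hdrop : ones A R C ≤ ones A R' C := by
      apply ones_drop
      intro i hi j hj hA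
      refine ⟨Finset.mem_filter.2 ⟨hi, ?_⟩, hj⟩
      by_contra hlt
      exact hnoabove i hi (by omega) j hj hA
    have hrec := rec1 R' C hR' hC hsubR (Finset.Subset.refl _) (by omega) (by omega)
    rw [← hcmax_def, ← hcmin_def] at hrec
    have hmin' : R'.min' hR' = w0 := by
      apply min'_eq
      · exact hw0R'
      · intro y hy; exact (Finset.mem_filter.1 hy).2
    have hmax' : R'.max' hR' = rmax := by
      apply max'_eq
      · exact Finset.mem_filter.2 ⟨hrmaxR, hrub w0 hw0R⟩
      · intro y hy; exact hrub y (hsubR hy)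
    rw [hmin', hmax'] at hrec
    rw [dd_eq_one A hw0A] at hrec
    have d1 := dd_le_one A rmax cmin
    have d3 := dd_le_one A rmax cmax
    have d2 := dd_le_one A rmin cmin
    omega
  case pos =>
  -- now A rmin cmin = true
  have hAmincorner : A rmin cmin = true := by rw [← hwr]; exact hw0A
  -- ones to the right of g0
  by_cases hro : ((R ×ˢ C).filter (fun p => g0 < p.2 ∧ A p.1 p.2 = true)).Nonempty
  case pos =>
    -- CASE 6a : dual split at right end of last row
    set ro := (R ×ˢ C).filter (fun p => g0 < p.2 ∧ A p.1 p.2 = true) with hro_def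
    have hmem_ro : ∀ i j : ℕ, (i, j) ∈ ro ↔ i ∈ R ∧ j ∈ C ∧ g0 < j ∧ A i j = true := by
      intro i j
      rw [hro_def, Finset.mem_filter, Finset.mem_product]
      constructor
      · rintro ⟨⟨h1, h2⟩, h3, h4⟩; exact ⟨h1, h2, h3, h4⟩
      · rintro ⟨h1, h2, h3, h4⟩; exact ⟨⟨h1, h2⟩, h3, h4⟩
    have himg : (ro.image Prod.fst).Nonempty := hro.image _
    set p0 := (ro.image Prod.fst).min' himg with hp0_def
    have hp0mem : p0 ∈ ro.image Prod.fst := Finset.min'_mem _ _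
    obtain ⟨⟨i0, j1⟩, hi0mem, hj0⟩ := Finset.mem_image.1 hp0mem
    simp only at hj0
    rw [hmem_ro] at hi0mem
    have hp0R : p0 ∈ R := hj0 ▸ hi0mem.1
    have hj1C : j1 ∈ C := hi0mem.2.1
    have hg0j1 : g0 < j1 := hi0mem.2.2.1
    have hA1 : A p0 j1 = true := hj0 ▸ hi0mem.2.2.2
    have hlb_right : ∀ i ∈ R, ∀ j ∈ C, g0 < j → A i j = true → p0 ≤ i := by
      intro i hi j hj hgj hA
      exact Finset.min'_le _ i (Finset.mem_image.2 ⟨(i, j), (hmem_ro i j).2 ⟨hi, hj, hgj, hA⟩, rfl⟩)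
    have hp0max : p0 < rmax := by
      rcases eq_or_lt_of_le (hrub p0 hp0R) with hEq | h
      · exfalso
        have := hg0right j1 hj1C (by rw [← hEq]; exact hA1)
        omega
      · exact h
    have hg0cmax : g0 < cmax := lt_of_lt_of_le hg0j1 (hcub j1 hj1C)
    have hclaim : ∀ i ∈ R, p0 < i → i < rmax → ∀ j ∈ C, A i j = true → j < g0 → False := by
      intro i hi h1 h2 j hj hA hjg
      exact hAv p0 hp0R i hi rmax hrmaxR j hj g0 hg0C j1 hj1C h1 h2 hjg hg0j1 hA1 hA hg0A
    set R1 := (R.filter (fun i => i ≤ p0)) ∪ {rmax} with hR1_def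
    set C1 := C.filter (fun j => j ≤ g0) with hC1_def
    set R2 := R.filter (fun i => p0 ≤ i ∧ i < rmax) with hR2_def
    set C2 := C.filter (fun j => g0 ≤ j) with hC2_def
    have hp0R1 : p0 ∈ R1 := Finset.mem_union_left _ (Finset.mem_filter.2 ⟨hp0R, le_refl _⟩)
    have hrmaxR1 : rmax ∈ R1 := Finset.mem_union_right _ (Finset.mem_singleton_self _)
    have hrminR1 : rmin ∈ R1 :=
      Finset.mem_union_left _ (Finset.mem_filter.2 ⟨hrminR, hrlb p0 hp0R⟩)
    have hg0C1 : g0 ∈ C1 := Finset.mem_filter.2 ⟨hg0C, le_refl _⟩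
    have hcminC1 : cmin ∈ C1 := Finset.mem_filter.2 ⟨hcminC, hclb g0 hg0C⟩
    have hp0R2 : p0 ∈ R2 := Finset.mem_filter.2 ⟨hp0R, le_refl _, hp0max⟩
    have hg0C2 : g0 ∈ C2 := Finset.mem_filter.2 ⟨hg0C, le_refl _⟩
    have hcmaxC2 : cmax ∈ C2 := Finset.mem_filter.2 ⟨hcmaxC, le_of_lt hg0cmax⟩
    have hn1 : R1.Nonempty := ⟨rmax, hrmaxR1⟩
    have hn2 : C1.Nonempty := ⟨g0, hg0C1⟩
    have hn3 : R2.Nonempty := ⟨p0, hp0R2⟩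
    have hn4 : C2.Nonempty := ⟨g0, hg0C2⟩
    have hR1subR : R1 ⊆ R := by
      intro x hx
      rcases Finset.mem_union.1 hx with h | h
      · exact Finset.filter_subset _ _ h
      · rw [Finset.mem_singleton] at h; subst h; exact hrmaxR
    have hRsplit : R1.card + R2.card = R.card + 1 := by
      apply card_split (x := p0)
      · ext i
        simp only [Finset.mem_union, hR1_def, hR2_def, Finset.mem_filter, Finset.mem_singleton]
        constructor
        · rintro ((⟨h, _⟩ | h) | ⟨h, _⟩)
          · exact h
          · subst h; exact hrmaxR
          · exact h
        · intro h
          rcases le_or_gt i p0 with h1 | h1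
          · exact Or.inl (Or.inl ⟨h, h1⟩)
          · by_cases h2 : i = rmax
            · exact Or.inl (Or.inr h2)
            · exact Or.inr ⟨h, le_of_lt h1, lt_of_le_of_ne (hrub i h) h2⟩
      · ext i
        simp only [Finset.mem_inter, Finset.mem_union, hR1_def, hR2_def, Finset.mem_filter,
          Finset.mem_singleton]
        constructor
        · rintro ⟨(⟨h1, h2⟩ | h1), ⟨h3, h4, h5⟩⟩ <;> omega
        · rintro rfl
          exact ⟨Or.inl ⟨hp0R, le_refl _⟩, ⟨hp0R, le_refl _, hp0max⟩⟩
    have hCsplit : C1.card + C2.card = C.card + 1 := by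
      apply card_split (x := g0)
      · ext j
        simp only [Finset.mem_union, hC1_def, hC2_def, Finset.mem_filter]
        constructor
        · rintro (⟨h, _⟩ | ⟨h, _⟩) <;> exact h
        · intro h
          rcases le_total j g0 with h1 | h1
          · exact Or.inl ⟨h, h1⟩
          · exact Or.inr ⟨h, h1⟩
      · ext j
        simp only [Finset.mem_inter, hC1_def, hC2_def, Finset.mem_filter, Finset.mem_singleton]
        constructor
        · rintro ⟨⟨h1, h2⟩, ⟨h3, h4⟩⟩; omega
        · rintro rfl; exact ⟨⟨hg0C, le_refl _⟩, ⟨hg0C, le_refl _⟩⟩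
    have hp2 : 2 ≤ R1.card := by
      have hsub : ({rmin, rmax} : Finset ℕ) ⊆ R1 := by
        intro x hx
        rcases Finset.mem_insert.1 hx with h | h
        · subst h; exact hrminR1
        · rw [Finset.mem_singleton] at h; subst h; exact hrmaxR1
      calc 2 = ({rmin, rmax} : Finset ℕ).card := (Finset.card_pair (by omega)).symm
      _ ≤ R1.card := Finset.card_le_card hsub
    have hq1 : 1 ≤ C1.card := Finset.card_pos.2 hn2
    have hr2c : 1 ≤ R2.card := Finset.card_pos.2 hn3
    have hc2c : 2 ≤ C2.card := by
      have hsub : ({g0, cmax} : Finset ℕ) ⊆ C2 := by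
        intro x hx
        rcases Finset.mem_insert.1 hx with h | h
        · subst h; exact hg0C2
        · rw [Finset.mem_singleton] at h; subst h; exact hcmaxC2
      calc 2 = ({g0, cmax} : Finset ℕ).card := (Finset.card_pair (by omega)).symm
      _ ≤ C2.card := Finset.card_le_card hsub
    have hq_le : C1.card ≤ C.card - 1 := by omega
    have hp_le : R1.card ≤ R.card := Finset.card_le_card hR1subR
    have hcover : ∀ i ∈ R, ∀ j ∈ C, A i j = true → (i ∈ R1 ∧ j ∈ C1) ∨ (i ∈ R2 ∧ j ∈ C2) := by
      intro i hi j hj hA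
      by_cases hieq : i = rmax
      · subst hieq
        exact Or.inl ⟨hrmaxR1, Finset.mem_filter.2 ⟨hj, hg0right j hj hA⟩⟩
      · have hirm : i < rmax := lt_of_le_of_ne (hrub i hi) hieq
        by_cases hjg : g0 < j
        · exact Or.inr ⟨Finset.mem_filter.2 ⟨hi, hlb_right i hi j hj hjg hA, hirm⟩,
            Finset.mem_filter.2 ⟨hj, le_of_lt hjg⟩⟩
        · push_neg at hjg
          rcases le_or_gt i p0 with h1 | h1
          · exact Or.inl ⟨Finset.mem_union_left _ (Finset.mem_filter.2 ⟨hi, h1⟩),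
              Finset.mem_filter.2 ⟨hj, hjg⟩⟩
          · rcases eq_or_lt_of_le hjg with hEq | hlt2
            · exact Or.inr ⟨Finset.mem_filter.2 ⟨hi, le_of_lt h1, hirm⟩,
                Finset.mem_filter.2 ⟨hj, le_of_eq hEq.symm⟩⟩
            · exact (hclaim i hi h1 hirm j hj hA hlt2).elim
    have hcov := cover2 hcover hp0R1 hg0C1 hp0R2 hg0C2
    have hR1max : R1.max' hn1 = rmax := by
      apply max'_eq hn1 hrmaxR1
      intro y hy
      rcases Finset.mem_union.1 hy with h | h
      · have := (Finset.mem_filter.1 h).2; omega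
      · rw [Finset.mem_singleton] at h; omega
    have hR1min : R1.min' hn1 = rmin :=
      min'_eq hn1 hrminR1 (fun y hy => hrlb y (hR1subR hy))
    have hC1min : C1.min' hn2 = cmin :=
      min'_eq hn2 hcminC1 (fun y hy => hclb y (Finset.filter_subset _ _ hy))
    have hC1max : C1.max' hn2 = g0 :=
      max'_eq hn2 hg0C1 (fun y hy => (Finset.mem_filter.1 hy).2)
    have hR2min : R2.min' hn3 = p0 :=
      min'_eq hn3 hp0R2 (fun y hy => (Finset.mem_filter.1 hy).2.1)
    have hC2min : C2.min' hn4 = g0 :=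
      min'_eq hn4 hg0C2 (fun y hy => (Finset.mem_filter.1 hy).2)
    have hC2max : C2.max' hn4 = cmax :=
      max'_eq hn4 hcmaxC2 (fun y hy => hcub y (Finset.filter_subset _ _ hy))
    by_cases hT4 : 4 ≤ R1.card + C1.card
    · by_cases hB4 : 4 ≤ R2.card + C2.card
      · -- generic double recursion
        have ih1 := rec1 R1 C1 hn1 hn2 hR1subR (Finset.filter_subset _ _) hT4 (by omega)
        have ih2 := rec1 R2 C2 hn3 hn4 (Finset.filter_subset _ _) (Finset.filter_subset _ _)
          hB4 (by omega)
        rw [hR1max, hR1min, hC1min, hC1max] at ih1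
        rw [hR2min, hC2min, hC2max] at ih2
        rw [dd_eq_one A hg0A] at ih1
        have d1 := dd_le_one A (R2.max' hn3) g0
        have d2 := dd_le_one A (R2.max' hn3) cmax
        have d3 := dd_le_one A rmax cmax
        omega
      · -- small B : R2 = {p0}, C2 = {g0, cmax}
        have h1 : R2.card = 1 ∧ C2.card = 2 := by omega
        have hR2eq : ∀ i ∈ R2, i = p0 := by
          intro i hi
          obtain ⟨x, hx⟩ := Finset.card_eq_one.1 h1.1
          have e1 : i = x := by rw [hx, Finset.mem_singleton] at hi; exact hi
          have e2 : p0 = x := by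
            have := hp0R2; rw [hx, Finset.mem_singleton] at this; exact this
          omega
        have hC2eq : ∀ j ∈ C2, j = g0 ∨ j = cmax := by
          have hsub : ({g0, cmax} : Finset ℕ) ⊆ C2 := by
            intro x hx
            rcases Finset.mem_insert.1 hx with h | h
            · subst h; exact hg0C2
            · rw [Finset.mem_singleton] at h; subst h; exact hcmaxC2
          have heq := Finset.eq_of_subset_of_card_le hsub
            (by rw [Finset.card_pair (by omega : g0 ≠ cmax)]; omega)
          intro j hj
          rw [← heq] at hj
          rcases Finset.mem_insert.1 hj with h | h
          · exact Or.inl h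
          · exact Or.inr (Finset.mem_singleton.1 h)
        have honesB : ones A R2 C2 ≤ dd A p0 g0 + dd A p0 cmax :=
          ones_le_single_pair hR2eq hC2eq
        have ih1 := rec1 R1 C1 hn1 hn2 hR1subR (Finset.filter_subset _ _)
          (by omega) (by omega)
        rw [hR1max, hR1min, hC1min, hC1max] at ih1
        rw [dd_eq_one A hg0A] at ih1
        have d1 := dd_le_one A p0 cmax
        have d3 := dd_le_one A rmax cmax
        omega
    · -- small T : R1 = {rmin, rmax}, C1 = {cmin}, so g0 = cmin, p0 = rmin
      have h1 : R1.card = 2 ∧ C1.card = 1 := by omega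
      have hC1eq : ∀ j ∈ C1, j = cmin := by
        intro j hj
        obtain ⟨x, hx⟩ := Finset.card_eq_one.1 h1.2
        have e1 : j = x := by rw [hx, Finset.mem_singleton] at hj; exact hj
        have e2 : cmin = x := by
          have := hcminC1; rw [hx, Finset.mem_singleton] at this; exact this
        omega
      have hg0cmin : g0 = cmin := hC1eq g0 hg0C1
      have hR1eq : ∀ i ∈ R1, i = rmin ∨ i = rmax := by
        have hsub : ({rmin, rmax} : Finset ℕ) ⊆ R1 := by
          intro x hx
          rcases Finset.mem_insert.1 hx with h | h
          · subst h; exact hrminR1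
          · rw [Finset.mem_singleton] at h; subst h; exact hrmaxR1
        have heq := Finset.eq_of_subset_of_card_le hsub
          (by rw [Finset.card_pair (by omega : rmin ≠ rmax)]; omega)
        intro i hi
        rw [← heq] at hi
        rcases Finset.mem_insert.1 hi with h | h
        · exact Or.inl h
        · exact Or.inr (Finset.mem_singleton.1 h)
      have hp0rmin : p0 = rmin := by
        rcases hR1eq p0 hp0R1 with h | h
        · exact h
        · omega
      have honesT : ones A R1 C1 ≤ dd A rmin cmin + dd A rmax cmin :=
        ones_le_pair_single hR1eq hC1eq
      have hblone : A rmax cmin = true := by rw [← hg0cmin]; exact hg0A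
      have ih2 := rec1 R2 C2 hn3 hn4 (Finset.filter_subset _ _) (Finset.filter_subset _ _)
        (by omega) (by omega)
      rw [hR2min, hC2min, hC2max] at ih2
      rw [hp0rmin, hg0cmin] at hcov ih2
      rw [dd_eq_one A hblone, dd_eq_one A hAmincorner]
      rw [dd_eq_one A hAmincorner] at hcov
      have d1 := dd_le_one A (R2.max' hn3) cmin
      have d2 := dd_le_one A rmin cmin
      have d2' := dd_le_one A (R2.max' hn3) cmax
      have d3 := dd_le_one A rmax cmax
      have do1 : dd A rmax cmin = 1 := dd_eq_one A hblone
      omega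
  case neg =>
  have hnoright : ∀ i ∈ R, ∀ j ∈ C, g0 < j → A i j = true → False := by
    intro i hi j hj hlt hA
    exact hro ⟨(i, j), Finset.mem_filter.2 ⟨Finset.mem_product.2 ⟨hi, hj⟩, hlt, hA⟩⟩
  by_cases hgc : g0 = cmax
  case neg =>
    -- DROP empty columns right of g0
    have hgcm : g0 < cmax := lt_of_le_of_ne (hcub g0 hg0C) hgc
    set C' := C.filter (fun j => j ≤ g0) with hC'_def
    have hg0C' : g0 ∈ C' := Finset.mem_filter.2 ⟨hg0C, le_refl _⟩
    have hC' : C'.Nonempty := ⟨g0, hg0C'⟩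
    have hsubC : C' ⊆ C := Finset.filter_subset _ _
    have hcard' : C'.card ≤ C.card - 1 := by
      have : C' ⊆ C.erase cmax := by
        intro j hj
        have h1 := Finset.mem_filter.1 hj
        exact Finset.mem_erase.2 ⟨by omega, h1.1⟩
      calc C'.card ≤ (C.erase cmax).card := Finset.card_le_card this
      _ = C.card - 1 := Finset.card_erase_of_mem hcmaxC
    have hC'1 : 1 ≤ C'.card := Finset.card_pos.2 hC'
    have hdrop : ones A R C ≤ ones A R C' := by
      apply ones_drop
      intro i hi j hj hA
      refine ⟨hi, Finset.mem_filter.2 ⟨hj, ?_⟩⟩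
      by_contra hlt
      exact hnoright i hi j hj (by omega) hA
    have hrec := rec1 R C' hR hC' (Finset.Subset.refl _) hsubC (by omega) (by omega)
    rw [← hrmax_def, ← hrmin_def] at hrec
    have hmin' : C'.min' hC' = cmin := by
      apply min'_eq
      · exact Finset.mem_filter.2 ⟨hcminC, hclb g0 hg0C⟩
      · intro y hy; exact hclb y (hsubC hy)
    have hmax' : C'.max' hC' = g0 := by
      apply max'_eq
      · exact hg0C'
      · intro y hy; exact (Finset.mem_filter.1 hy).2
    rw [hmin', hmax'] at hrec
    rw [dd_eq_one A hg0A] at hrec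
    have d1 := dd_le_one A rmax cmin
    have d2 := dd_le_one A rmin cmin
    omega
  case pos =>
  -- CASE 7 : both corners are ones, delete them
  have hAmaxcorner : A rmax cmax = true := by rw [← hgc]; exact hg0A
  classical
  set A' : ℕ → ℕ → Bool := fun i j =>
    if (i = rmin ∧ j = cmin) ∨ (i = rmax ∧ j = cmax) then false else A i j with hA'_def
  have hA'le : ∀ i j, A' i j = true → A i j = true := by
    intro i j h
    rw [hA'_def] at h
    simp only at h
    split at h
    · exact absurd h (by simp)
    · exact h
  have hA'av : Av A' R C := av_impl hA'le hAv
  have hA'c1 : A' rmin cmin = false := by rw [hA'_def]; simp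
  have hA'c2 : A' rmax cmax = false := by rw [hA'_def]; simp
  have hA'bl : A' rmax cmin = A rmax cmin := by
    rw [hA'_def]
    simp only
    rw [if_neg]
    push_neg
    constructor
    · intro h; omega
    · intro h; omega
  -- counting: ones A R C ≤ ones A' R C + 2 and ones A' R C + 2 ≤ ones A R C
  have hones_le : ones A R C ≤ ones A' R C + 2 := by
    have hsub : (R ×ˢ C).filter (fun p => A p.1 p.2 = true) ⊆
        insert (rmin, cmin) (insert (rmax, cmax)
          ((R ×ˢ C).filter (fun p => A' p.1 p.2 = true))) := by
      intro p hp
      rw [mem_onesSet] at hp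
      by_cases h1 : p = (rmin, cmin)
      · exact Finset.mem_insert.2 (Or.inl h1)
      by_cases h2 : p = (rmax, cmax)
      · exact Finset.mem_insert.2 (Or.inr (Finset.mem_insert.2 (Or.inl h2)))
      refine Finset.mem_insert.2 (Or.inr (Finset.mem_insert.2 (Or.inr ?_)))
      rw [mem_onesSet]
      refine ⟨hp.1, hp.2.1, ?_⟩
      rw [hA'_def]
      simp only
      rw [if_neg]
      · exact hp.2.2
      · push_neg
        constructor
        · intro ha hb; exact h1 (Prod.ext ha hb)
        · intro ha hb; exact h2 (Prod.ext ha hb)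
    have c0 := Finset.card_le_card hsub
    have c1 := Finset.card_insert_le ((rmin : ℕ), cmin) (insert ((rmax : ℕ), cmax)
      ((R ×ˢ C).filter (fun p => A' p.1 p.2 = true)))
    have c2 := Finset.card_insert_le ((rmax : ℕ), cmax)
      ((R ×ˢ C).filter (fun p => A' p.1 p.2 = true))
    have e1 : ones A' R C = ((R ×ˢ C).filter (fun p => A' p.1 p.2 = true)).card := rfl
    have e2 : ones A R C = ((R ×ˢ C).filter (fun p => A p.1 p.2 = true)).card := rfl
    omega
  have hones_ge : ones A' R C + 2 ≤ ones A R C := by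
    have hne : ((rmin : ℕ), cmin) ≠ (rmax, cmax) := by
      intro h; exact absurd (congrArg Prod.fst h) (by simp; omega)
    have hm1 : ((rmin : ℕ), cmin) ∈ (R ×ˢ C).filter (fun p => A p.1 p.2 = true) :=
      mem_onesSet.2 ⟨hrminR, hcminC, hAmincorner⟩
    have hm2 : ((rmax : ℕ), cmax) ∈ (R ×ˢ C).filter (fun p => A p.1 p.2 = true) :=
      mem_onesSet.2 ⟨hrmaxR, hcmaxC, hAmaxcorner⟩
    have hsub : insert ((rmin : ℕ), cmin) (insert ((rmax : ℕ), cmax)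
        ((R ×ˢ C).filter (fun p => A' p.1 p.2 = true))) ⊆
        (R ×ˢ C).filter (fun p => A p.1 p.2 = true) := by
      intro p hp
      rcases Finset.mem_insert.1 hp with h | h
      · subst h; exact hm1
      rcases Finset.mem_insert.1 h with h | h
      · subst h; exact hm2
      · rw [mem_onesSet] at h ⊢
        exact ⟨h.1, h.2.1, hA'le _ _ h.2.2⟩
    have hn1 : ((rmin : ℕ), cmin) ∉ insert ((rmax : ℕ), cmax)
        ((R ×ˢ C).filter (fun p => A' p.1 p.2 = true)) := by
      intro h
      rcases Finset.mem_insert.1 h with h | h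
      · exact hne h
      · rw [mem_onesSet] at h
        rw [hA'c1] at h
        exact absurd h.2.2 (by simp)
    have hn2 : ((rmax : ℕ), cmax) ∉ (R ×ˢ C).filter (fun p => A' p.1 p.2 = true) := by
      intro h
      rw [mem_onesSet] at h
      rw [hA'c2] at h
      exact absurd h.2.2 (by simp)
    have := Finset.card_le_card hsub
    rw [Finset.card_insert_of_notMem hn1, Finset.card_insert_of_notMem hn2] at this
    have e1 : ones A' R C = ((R ×ˢ C).filter (fun p => A' p.1 p.2 = true)).card := rfl
    have e2 : ones A R C = ((R ×ˢ C).filter (fun p => A p.1 p.2 = true)).card := rfl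
    omega
  have hrec := rec0 A' R C hR hC hA'av hk (by omega)
  rw [← hrmax_def, ← hrmin_def, ← hcmax_def, ← hcmin_def] at hrec
  rw [dd_eq_zero A' hA'c1, dd_eq_zero A' hA'c2] at hrec
  have hddbl : dd A' rmax cmin = dd A rmax cmin := by rw [dd, dd, hA'bl]
  rw [hddbl] at hrec
  rw [dd_eq_one A hAmincorner, dd_eq_one A hAmaxcorner]
  omega

end P13

theorem stmt_13 (m n : ℕ) (hm : 3 ≤ m) (hn : 3 ≤ n) (A : ℕ → ℕ → Bool)
    (hA : Avoid312 m n A) : onesCount m n A ≤ 2 * (m + n - 2) := by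
  classical
  have hAv : P13.Av A (Finset.Icc 1 m) (Finset.Icc 1 n) := by
    intro r1 h1 r2 h2 r3 h3 c1 g1 c2 g2 c3 g3 l1 l2 l3 l4 e1 e2 e3
    apply hA
    exact ⟨r1, r2, r3, c1, c2, c3, (Finset.mem_Icc.1 h1).1, l1, l2, (Finset.mem_Icc.1 h3).2,
      (Finset.mem_Icc.1 g1).1, l3, l4, (Finset.mem_Icc.1 g3).2, e1, e2, e3⟩
  have hRne : (Finset.Icc 1 m).Nonempty := ⟨1, Finset.mem_Icc.2 ⟨le_refl _, by omega⟩⟩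
  have hCne : (Finset.Icc 1 n).Nonempty := ⟨1, Finset.mem_Icc.2 ⟨le_refl _, by omega⟩⟩
  have hcard1 : (Finset.Icc 1 m).card = m := by rw [Nat.card_Icc]; omega
  have hcard2 : (Finset.Icc 1 n).card = n := by rw [Nat.card_Icc]; omega
  have hmain := P13.main (((Finset.Icc 1 m).card + (Finset.Icc 1 n).card)^3
      + P13.ones A (Finset.Icc 1 m) (Finset.Icc 1 n)) A (Finset.Icc 1 m) (Finset.Icc 1 n)
      hRne hCne hAv (by rw [hcard1, hcard2]; omega) le_rfl
  have hones : onesCount m n A = P13.ones A (Finset.Icc 1 m) (Finset.Icc 1 n) := rfl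
  have d1 := P13.dd_le_one A ((Finset.Icc 1 m).max' hRne) ((Finset.Icc 1 n).min' hCne)
  have d2 := P13.dd_le_one A ((Finset.Icc 1 m).min' hRne) ((Finset.Icc 1 n).min' hCne)
  have d3 := P13.dd_le_one A ((Finset.Icc 1 m).max' hRne) ((Finset.Icc 1 n).max' hCne)
  rw [hcard1, hcard2] at hmain
  rw [hones]
  omega
end

section
/- Let m, n ≥ 3. There exists a 312-avoiding m×n (0,1)-matrix with exactly 2(m + n − 2) ones; hence the maximum number of 1's of a 312-avoiding m×n (0,1)-matrix equals 2(m + n − 2). -/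
namespace Stmt14Aux

/-- The set of positions of ones. -/
def O (m n : ℕ) (A : ℕ → ℕ → Bool) : Finset (ℕ × ℕ) :=
  ((Finset.Icc 1 m) ×ˢ (Finset.Icc 1 n)).filter fun p => A p.1 p.2 = true

lemma mem_O {m n : ℕ} {A : ℕ → ℕ → Bool} {x : ℕ × ℕ} :
    x ∈ O m n A ↔ (1 ≤ x.1 ∧ x.1 ≤ m) ∧ (1 ≤ x.2 ∧ x.2 ≤ n) ∧ A x.1 x.2 = true := by
  simp [O, Finset.mem_filter, Finset.mem_product, Finset.mem_Icc, and_assoc]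

lemma onesCount_eq (m n : ℕ) (A : ℕ → ℕ → Bool) : onesCount m n A = (O m n A).card := rfl

/-- Rows above `r` containing a one in column `c`. -/
def above (A : ℕ → ℕ → Bool) (r c : ℕ) : Finset ℕ :=
  (Finset.Ico 1 r).filter fun i => A i c = true

lemma mem_above {A : ℕ → ℕ → Bool} {r c i : ℕ} :
    i ∈ above A r c ↔ (1 ≤ i ∧ i < r) ∧ A i c = true := by
  simp [above, Finset.mem_filter, Finset.mem_Ico]

/-- A one is deep if it has at least two ones above it in its column. -/
def deepP (A : ℕ → ℕ → Bool) (x : ℕ × ℕ) : Prop :=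
  2 ≤ (above A x.1 x.2).card

instance (A : ℕ → ℕ → Bool) : DecidablePred (deepP A) := fun _ => Nat.decLe _ _

/-- The predecessor row: the largest row above with a one in the same column. -/
def phi (A : ℕ → ℕ → Bool) (x : ℕ × ℕ) : ℕ := (above A x.1 x.2).sup id

lemma phi_mem {A : ℕ → ℕ → Bool} {x : ℕ × ℕ} (h : deepP A x) :
    phi A x ∈ above A x.1 x.2 := by
  have hne : (above A x.1 x.2).Nonempty := Finset.card_pos.mp (by unfold deepP at h; omega)
  obtain ⟨b, hb, he⟩ := Finset.exists_mem_eq_sup _ hne id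
  rw [phi, he]; exact hb

lemma le_phi {A : ℕ → ℕ → Bool} {x : ℕ × ℕ} {a : ℕ} (ha : a ∈ above A x.1 x.2) :
    a ≤ phi A x :=
  Finset.le_sup (f := id) ha

lemma exists_second {A : ℕ → ℕ → Bool} {x : ℕ × ℕ} (h : deepP A x) :
    ∃ p ∈ above A x.1 x.2, p < phi A x := by
  have h1 : 1 < (above A x.1 x.2).card := by unfold deepP at h; omega
  obtain ⟨p, hp, hne⟩ := Finset.exists_mem_ne h1 (phi A x)
  exact ⟨p, hp, lt_of_le_of_ne (le_phi hp) hne⟩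

lemma above_card_lt {A : ℕ → ℕ → Bool} {r r' c : ℕ} (h1 : 1 ≤ r) (hrr : r < r')
    (hA : A r c = true) : (above A r c).card < (above A r' c).card := by
  apply Finset.card_lt_card
  rw [Finset.ssubset_iff_of_subset (by
    intro i hi
    rw [mem_above] at hi ⊢
    exact ⟨⟨hi.1.1, hi.1.2.trans hrr⟩, hi.2⟩)]
  exact ⟨r, mem_above.mpr ⟨⟨h1, hrr⟩, hA⟩, by rw [mem_above]; simp⟩

lemma same_col_aux {m n : ℕ} {A : ℕ → ℕ → Bool} {x y : ℕ × ℕ} {r' : ℕ}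
    (hxO : x ∈ O m n A) (hxd : deepP A x) (hxp : phi A x = r')
    (hyd : deepP A y) (hyp : phi A y = r')
    (hlt : x.1 < y.1) (hcol : x.2 = y.2) : False := by
  have h1 : 1 ≤ x.1 := (mem_O.mp hxO).1.1
  have hAx : A x.1 y.2 = true := by rw [← hcol]; exact (mem_O.mp hxO).2.2
  have hmem : x.1 ∈ above A y.1 y.2 := mem_above.mpr ⟨⟨h1, hlt⟩, hAx⟩
  have h2 : x.1 ≤ phi A y := le_phi hmem
  have h3 : phi A x < x.1 := (mem_above.mp (phi_mem hxd)).1.2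
  omega

lemma no_three {m n : ℕ} {A : ℕ → ℕ → Bool} (hA : Avoid312 m n A) {x y z : ℕ × ℕ} {r' : ℕ}
    (hxO : x ∈ O m n A) (hxd : deepP A x) (hxp : phi A x = r')
    (hyO : y ∈ O m n A) (hyd : deepP A y) (hyp : phi A y = r')
    (hzO : z ∈ O m n A) (hzd : deepP A z) (hzp : phi A z = r')
    (hxy : x.2 < y.2) (hyz : y.2 < z.2) : False := by
  obtain ⟨p, hp, hplt⟩ := exists_second hzd
  have hpmem := mem_above.mp hp
  have hrx := mem_above.mp (phi_mem hxd)
  have hry := mem_above.mp (phi_mem hyd)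
  have hplt' : p < r' := by rw [hzp] at hplt; exact hplt
  have hry' : r' < y.1 := by rw [← hyp]; exact hry.1.2
  have hArx : A r' x.2 = true := by rw [← hxp]; exact hrx.2
  exact hA ⟨p, r', y.1, x.2, y.2, z.2,
    hpmem.1.1, hplt', hry', (mem_O.mp hyO).1.2,
    (mem_O.mp hxO).2.1.1, hxy, hyz, (mem_O.mp hzO).2.1.2,
    hpmem.2, hArx, (mem_O.mp hyO).2.2⟩

lemma fiber_le_two {m n : ℕ} {A : ℕ → ℕ → Bool} (hA : Avoid312 m n A) (r' : ℕ) :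
    (((O m n A).filter (deepP A)).filter fun x => phi A x = r').card ≤ 2 := by
  by_contra hc
  push_neg at hc
  obtain ⟨x, y, z, hx, hy, hz, hxy, hxz, hyz⟩ := Finset.two_lt_card_iff.mp hc
  simp only [Finset.mem_filter] at hx hy hz
  obtain ⟨⟨hxO, hxd⟩, hxp⟩ := hx
  obtain ⟨⟨hyO, hyd⟩, hyp⟩ := hy
  obtain ⟨⟨hzO, hzd⟩, hzp⟩ := hz
  have key : ∀ u v : ℕ × ℕ, u ∈ O m n A → deepP A u → phi A u = r' →
      v ∈ O m n A → deepP A v → phi A v = r' → u ≠ v → u.2 ≠ v.2 := by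
    intro u v huO hud hup hvO hvd hvp hne hcol
    rcases lt_trichotomy u.1 v.1 with h | h | h
    · exact same_col_aux huO hud hup hvd hvp h hcol
    · exact hne (Prod.ext h hcol)
    · exact same_col_aux hvO hvd hvp hud hup h hcol.symm
  have d1 := key x y hxO hxd hxp hyO hyd hyp hxy
  have d2 := key x z hxO hxd hxp hzO hzd hzp hxz
  have d3 := key y z hyO hyd hyp hzO hzd hzp hyz
  rcases lt_trichotomy x.2 y.2 with h1 | h1 | h1
  · rcases lt_trichotomy y.2 z.2 with h2 | h2 | h2
    · exact no_three hA hxO hxd hxp hyO hyd hyp hzO hzd hzp h1 h2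
    · exact d3 h2
    · rcases lt_trichotomy x.2 z.2 with h3 | h3 | h3
      · exact no_three hA hxO hxd hxp hzO hzd hzp hyO hyd hyp h3 h2
      · exact d2 h3
      · exact no_three hA hzO hzd hzp hxO hxd hxp hyO hyd hyp h3 h1
  · exact d1 h1
  · rcases lt_trichotomy x.2 z.2 with h2 | h2 | h2
    · exact no_three hA hyO hyd hyp hxO hxd hxp hzO hzd hzp h1 h2
    · exact d2 h2
    · rcases lt_trichotomy y.2 z.2 with h3 | h3 | h3
      · exact no_three hA hyO hyd hyp hzO hzd hzp hxO hxd hxp h3 h2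
      · exact d3 h3
      · exact no_three hA hzO hzd hzp hyO hyd hyp hxO hxd hxp h3 h1

lemma deep_card_le {m n : ℕ} {A : ℕ → ℕ → Bool} (hm : 3 ≤ m) (hA : Avoid312 m n A) :
    ((O m n A).filter (deepP A)).card ≤ 2 * (m - 2) := by
  set D := (O m n A).filter (deepP A) with hD
  have himg : D.image (phi A) ⊆ Finset.Icc 2 (m - 1) := by
    intro r' hr'
    obtain ⟨x, hx, rfl⟩ := Finset.mem_image.mp hr'
    rw [hD, Finset.mem_filter] at hx
    obtain ⟨hxO, hxd⟩ := hx
    obtain ⟨p, hp, hplt⟩ := exists_second hxd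
    have h1 := (mem_above.mp hp).1.1
    have h2 := (mem_above.mp (phi_mem hxd)).1.2
    have h3 := (mem_O.mp hxO).1.2
    rw [Finset.mem_Icc]; omega
  calc D.card = ∑ r' ∈ D.image (phi A), (D.filter fun x => phi A x = r').card :=
        Finset.card_eq_sum_card_image (phi A) D
    _ ≤ (D.image (phi A)).card • 2 := by
        apply Finset.sum_le_card_nsmul
        intro r' _
        exact fiber_le_two hA r'
    _ ≤ (m - 2) * 2 := by
        rw [smul_eq_mul]
        apply Nat.mul_le_mul_right
        calc (D.image (phi A)).card ≤ (Finset.Icc 2 (m - 1)).card := Finset.card_le_card himg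
          _ = m - 2 := by rw [Nat.card_Icc]; omega
    _ = 2 * (m - 2) := Nat.mul_comm _ _

lemma nondeep_card_le {m n : ℕ} {A : ℕ → ℕ → Bool} :
    ((O m n A).filter fun x => ¬ deepP A x).card ≤ 2 * n := by
  set N := (O m n A).filter fun x => ¬ deepP A x with hN
  have himg : N.image Prod.snd ⊆ Finset.Icc 1 n := by
    intro c hc
    obtain ⟨x, hx, rfl⟩ := Finset.mem_image.mp hc
    rw [hN, Finset.mem_filter] at hx
    rw [Finset.mem_Icc]
    exact (mem_O.mp hx.1).2.1
  have hfib : ∀ c ∈ N.image Prod.snd, (N.filter fun x => x.2 = c).card ≤ 2 := by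
    intro c _
    have h2 : (N.filter fun x => x.2 = c).card ≤ (Finset.range 2).card := by
      apply Finset.card_le_card_of_injOn (fun x => (above A x.1 x.2).card)
      · intro x hx
        rw [Finset.mem_coe, Finset.mem_filter, hN, Finset.mem_filter] at hx
        have hnd : ¬ deepP A x := hx.1.2
        unfold deepP at hnd
        rw [Finset.mem_coe, Finset.mem_range]
        show (above A x.1 x.2).card < 2
        omega
      · intro u hu v hv huv
        simp only [Finset.coe_filter, Set.mem_setOf_eq] at hu hv
        rw [hN, Finset.mem_filter] at hu hv
        have hcc : u.2 = v.2 := hu.2.trans hv.2.symm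
        have huv' : (above A u.1 u.2).card = (above A v.1 v.2).card := huv
        rcases lt_trichotomy u.1 v.1 with h | h | h
        · exfalso
          have hAu : A u.1 v.2 = true := by rw [← hcc]; exact (mem_O.mp hu.1.1).2.2
          have := above_card_lt (mem_O.mp hu.1.1).1.1 h hAu
          rw [hcc] at huv'
          omega
        · exact Prod.ext h hcc
        · exfalso
          have hAv : A v.1 u.2 = true := by rw [hcc]; exact (mem_O.mp hv.1.1).2.2
          have := above_card_lt (mem_O.mp hv.1.1).1.1 h hAv
          rw [← hcc] at huv'
          omega
    simpa using h2
  calc N.card = ∑ c ∈ N.image Prod.snd, (N.filter fun x => x.2 = c).card :=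
        Finset.card_eq_sum_card_image Prod.snd N
    _ ≤ (N.image Prod.snd).card • 2 := Finset.sum_le_card_nsmul _ _ _ hfib
    _ ≤ n * 2 := by
        rw [smul_eq_mul]
        apply Nat.mul_le_mul_right
        calc (N.image Prod.snd).card ≤ (Finset.Icc 1 n).card := Finset.card_le_card himg
          _ = n := by rw [Nat.card_Icc]; omega
    _ = 2 * n := Nat.mul_comm _ _

theorem upper_bound {m n : ℕ} (hm : 3 ≤ m) (hn : 3 ≤ n) {A : ℕ → ℕ → Bool}
    (hA : Avoid312 m n A) : onesCount m n A ≤ 2 * (m + n - 2) := by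
  have hsplit :=
    Finset.card_filter_add_card_filter_not (s := O m n A) (p := deepP A)
  have h1 := deep_card_le hm hA
  have h2 := nondeep_card_le (m := m) (n := n) (A := A)
  rw [onesCount_eq]
  omega

theorem exists_extremal (m n : ℕ) (hm : 3 ≤ m) (hn : 3 ≤ n) :
    ∃ A, Avoid312 m n A ∧ onesCount m n A = 2 * (m + n - 2) := by
  refine ⟨fun i j => decide (j ≤ 2 ∨ m - 1 ≤ i), ?_, ?_⟩
  · rintro ⟨r1, r2, r3, c1, c2, c3, h1, h2, h3, h4, h5, h6, h7, h8, ha, hb, hc⟩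
    rw [decide_eq_true_eq] at ha
    omega
  · unfold onesCount
    have hset : ((Finset.Icc 1 m ×ˢ Finset.Icc 1 n).filter
          fun p => (fun i j => decide (j ≤ 2 ∨ m - 1 ≤ i)) p.1 p.2 = true)
        = (Finset.Icc 1 m ×ˢ Finset.Icc 1 2) ∪ (Finset.Icc (m - 1) m ×ˢ Finset.Icc 3 n) := by
      ext ⟨i, j⟩
      simp only [Finset.mem_filter, Finset.mem_product, Finset.mem_union, Finset.mem_Icc,
        decide_eq_true_eq]
      omega
    rw [hset, Finset.card_union_of_disjoint, Finset.card_product, Finset.card_product,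
      Nat.card_Icc, Nat.card_Icc, Nat.card_Icc, Nat.card_Icc]
    · have e1 : m + 1 - (m - 1) = 2 := by omega
      have e2 : n + 1 - 3 = n - 2 := by omega
      rw [e1, e2]
      omega
    · rw [Finset.disjoint_left]
      rintro ⟨i, j⟩ h1 h2
      simp only [Finset.mem_product, Finset.mem_Icc] at h1 h2
      omega

end Stmt14Aux

theorem stmt_14 (m n : ℕ) (hm : 3 ≤ m) (hn : 3 ≤ n) :
    (∃ A : ℕ → ℕ → Bool, Avoid312 m n A ∧ onesCount m n A = 2 * (m + n - 2)) ∧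
    IsGreatest {c : ℕ | ∃ A : ℕ → ℕ → Bool, Avoid312 m n A ∧ onesCount m n A = c}
      (2 * (m + n - 2)) := by
  obtain ⟨A, hA, hc⟩ := Stmt14Aux.exists_extremal m n hm hn
  refine ⟨⟨A, hA, hc⟩, ⟨A, hA, hc⟩, ?_⟩
  rintro c ⟨B, hB, rfl⟩
  exact Stmt14Aux.upper_bound hm hn hB
end

section
/- Let m, n ≥ 3. Every maximal 312-avoiding m×n (0,1)-matrix contains exactly 2(m + n − 2) ones. -/
/-- The matrix obtained from `A` by changing the entry in position `(i, j)` to `1`. -/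
def setOne (A : ℕ → ℕ → Bool) (i j : ℕ) : ℕ → ℕ → Bool :=
  fun i' j' => if i' = i ∧ j' = j then true else A i' j'

/-- `A` is maximal 312-avoiding. -/
def MaximalAvoid312 (m n : ℕ) (A : ℕ → ℕ → Bool) : Prop :=
  Avoid312 m n A ∧
    ∀ i j : ℕ, 1 ≤ i → i ≤ m → 1 ≤ j → j ≤ n → A i j = false →
      ¬ Avoid312 m n (setOne A i j)

section Work
variable {m n : ℕ} {A : ℕ → ℕ → Bool}

/-- avoidance, usable form -/
lemma avoid_no (h : Avoid312 m n A) {r₁ r₂ r₃ c₁ c₂ c₃ : ℕ}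
    (h1 : 1 ≤ r₁) (h2 : r₁ < r₂) (h3 : r₂ < r₃) (h4 : r₃ ≤ m)
    (h5 : 1 ≤ c₁) (h6 : c₁ < c₂) (h7 : c₂ < c₃) (h8 : c₃ ≤ n)
    (ha : A r₁ c₃ = true) (hb : A r₂ c₁ = true) (hc : A r₃ c₂ = true) : False :=
  h ⟨r₁, r₂, r₃, c₁, c₂, c₃, h1, h2, h3, h4, h5, h6, h7, h8, ha, hb, hc⟩

lemma setOne_true {i j r c : ℕ} (h : setOne A i j r c = true) :
    (r = i ∧ c = j) ∨ A r c = true := by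
  unfold setOne at h
  split_ifs at h with hc
  · exact Or.inl hc
  · exact Or.inr h

/-- The three-roles witness lemma. -/
lemma witness (hA : MaximalAvoid312 m n A) {i j : ℕ}
    (hi1 : 1 ≤ i) (him : i ≤ m) (hj1 : 1 ≤ j) (hjn : j ≤ n) (h0 : A i j = false) :
    (∃ r₂ r₃ c₁ c₂, i < r₂ ∧ r₂ < r₃ ∧ r₃ ≤ m ∧ 1 ≤ c₁ ∧ c₁ < c₂ ∧ c₂ < j ∧
        A r₂ c₁ = true ∧ A r₃ c₂ = true) ∨
    (∃ r₁ r₃ c₂ c₃, 1 ≤ r₁ ∧ r₁ < i ∧ i < r₃ ∧ r₃ ≤ m ∧ j < c₂ ∧ c₂ < c₃ ∧ c₃ ≤ n ∧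
        A r₁ c₃ = true ∧ A r₃ c₂ = true) ∨
    (∃ r₁ r₂ c₁ c₃, 1 ≤ r₁ ∧ r₁ < r₂ ∧ r₂ < i ∧ 1 ≤ c₁ ∧ c₁ < j ∧ j < c₃ ∧ c₃ ≤ n ∧
        A r₁ c₃ = true ∧ A r₂ c₁ = true) := by
  have hw := hA.2 i j hi1 him hj1 hjn h0
  rw [Avoid312, not_not] at hw
  obtain ⟨r₁, r₂, r₃, c₁, c₂, c₃, h1, h2, h3, h4, h5, h6, h7, h8, ha, hb, hc⟩ := hw
  rcases setOne_true ha with ⟨rfl, rfl⟩ | ha' <;>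
  rcases setOne_true hb with ⟨hre, hce⟩ | hb' <;>
  rcases setOne_true hc with ⟨hre2, hce2⟩ | hc'
  · omega
  · omega
  · omega
  · exact Or.inl ⟨r₂, r₃, c₁, c₂, h2, h3, h4, h5, h6, h7, hb', hc'⟩
  · omega
  · subst hre hce
    exact Or.inr (Or.inl ⟨r₁, r₃, c₂, c₃, h1, h2, h3, h4, h6, h7, h8, ha', hc'⟩)
  · subst hre2 hce2
    exact Or.inr (Or.inr ⟨r₁, r₂, c₁, c₃, h1, h2, h3, h5, h6, h7, h8, ha', hb'⟩)
  · exact absurd ⟨r₁, r₂, r₃, c₁, c₂, c₃, h1, h2, h3, h4, h5, h6, h7, h8, ha', hb', hc'⟩ hA.1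

end Work

section Work2
variable {m n : ℕ} {A : ℕ → ℕ → Bool}

/-- Bool helper -/
lemma bool_tf {b : Bool} (h : ¬ b = true) : b = false := by
  cases b <;> simp_all

lemma forced_11 (hA : MaximalAvoid312 m n A) (hm : 3 ≤ m) (hn : 3 ≤ n) :
    A 1 1 = true := by
  by_contra h
  rcases witness hA (by omega) (by omega) (by omega) (by omega) (bool_tf h) with
    ⟨r₂, r₃, c₁, c₂, h⟩ | ⟨r₁, r₃, c₂, c₃, h⟩ | ⟨r₁, r₂, c₁, c₃, h⟩ <;> omega

lemma forced_12 (hA : MaximalAvoid312 m n A) (hm : 3 ≤ m) (hn : 3 ≤ n) :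
    A 1 2 = true := by
  by_contra h
  rcases witness hA (by omega) (by omega) (by omega) (by omega) (bool_tf h) with
    ⟨r₂, r₃, c₁, c₂, h⟩ | ⟨r₁, r₃, c₂, c₃, h⟩ | ⟨r₁, r₂, c₁, c₃, h⟩ <;> omega

lemma forced_m1 (hA : MaximalAvoid312 m n A) (hm : 3 ≤ m) (hn : 3 ≤ n) :
    A m 1 = true := by
  by_contra h
  rcases witness hA (by omega) (by omega) (by omega) (by omega) (bool_tf h) with
    ⟨r₂, r₃, c₁, c₂, h⟩ | ⟨r₁, r₃, c₂, c₃, h⟩ | ⟨r₁, r₂, c₁, c₃, h⟩ <;> omega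

lemma forced_mn (hA : MaximalAvoid312 m n A) (hm : 3 ≤ m) (hn : 3 ≤ n) :
    A m n = true := by
  by_contra h
  rcases witness hA (by omega) (by omega) (by omega) (by omega) (bool_tf h) with
    ⟨r₂, r₃, c₁, c₂, h⟩ | ⟨r₁, r₃, c₂, c₃, h⟩ | ⟨r₁, r₂, c₁, c₃, h⟩ <;> omega

lemma forced_m1n (hA : MaximalAvoid312 m n A) (hm : 3 ≤ m) (hn : 3 ≤ n) :
    A (m-1) n = true := by
  by_contra h
  rcases witness hA (by omega) (by omega) (by omega) (by omega) (bool_tf h) with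
    ⟨r₂, r₃, c₁, c₂, h⟩ | ⟨r₁, r₃, c₂, c₃, h⟩ | ⟨r₁, r₂, c₁, c₃, h⟩ <;> omega

/-- column n is downward closed -/
lemma coln_closed (hA : MaximalAvoid312 m n A) (hm : 3 ≤ m) (hn : 3 ≤ n)
    {x x' : ℕ} (hx'1 : 1 ≤ x') (hlt : x' < x) (hxm : x ≤ m)
    (hone : A x' n = true) : A x n = true := by
  by_contra h
  rcases witness hA (by omega) hxm (by omega) (le_refl n) (bool_tf h) with
    ⟨r₂, r₃, c₁, c₂, h1, h2, h3, h4, h5, h6, hb, hc⟩ |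
    ⟨r₁, r₃, c₂, c₃, h⟩ | ⟨r₁, r₂, c₁, c₃, h⟩
  · exact avoid_no hA.1 hx'1 (by omega) h2 h3 h4 h5 h6 (le_refl n) hone hb hc
  · omega
  · omega

end Work2

section Work3
variable {m n : ℕ} {A : ℕ → ℕ → Bool}

lemma row_two (hA : MaximalAvoid312 m n A) (hm : 3 ≤ m) (hn : 3 ≤ n)
    {i : ℕ} (hi1 : 1 ≤ i) (him : i ≤ m) :
    ∃ j j', 1 ≤ j ∧ j < j' ∧ j' ≤ n ∧ A i j = true ∧ A i j' = true := by
  classical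
  rcases eq_or_lt_of_le hi1 with h1 | hi2
  · exact ⟨1, 2, le_refl 1, by omega, by omega, h1 ▸ forced_11 hA hm hn, h1 ▸ forced_12 hA hm hn⟩
  rcases eq_or_lt_of_le him with hm' | him'
  · exact ⟨1, n, le_refl 1, by omega, le_refl n, hm' ▸ forced_m1 hA hm hn, hm' ▸ forced_mn hA hm hn⟩
  by_contra hcon
  push_neg at hcon
  have hsingle : ∀ {j j' : ℕ}, 1 ≤ j → j < j' → j' ≤ n → A i j = true → A i j' = true → False := by
    intro j j' h1 h2 h3 h4 h5
    exact absurd h5 (hcon j j' h1 h2 h3 h4)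
  set Pq : ℕ → Prop := fun c => c ≤ n ∧ ∃ r, 1 ≤ r ∧ r ≤ i ∧ A r c = true with hPqdef
  set q := Nat.findGreatest Pq n with hqdef
  have hPq2 : Pq 2 := ⟨by omega, 1, le_refl 1, by omega, forced_12 hA hm hn⟩
  have hq2 : 2 ≤ q := Nat.le_findGreatest (by omega) hPq2
  have hPqq : Pq q := Nat.findGreatest_spec (m := 2) (by omega) hPq2
  obtain ⟨hqn, p, hp1, hpi, hApq⟩ := hPqq
  have hqmax : ∀ c, q < c → c ≤ n → ∀ r, 1 ≤ r → r ≤ i → A r c = false := by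
    intro c h1 h2 r h3 h4
    exact bool_tf fun hh => Nat.findGreatest_is_greatest h1 h2 ⟨h2, r, h3, h4, hh⟩
  rcases eq_or_lt_of_le hqn with hq | hqlt
  · -- q = n
    have hin : A i n = true := by
      rcases eq_or_lt_of_le hpi with he | hlt
      · exact he ▸ (hq ▸ hApq)
      · exact coln_closed hA hm hn hp1 hlt him (hq ▸ hApq)
    have hz : ∀ j, 1 ≤ j → j < n → A i j = false := fun j h1 h2 =>
      bool_tf fun hh => hsingle h1 h2 (le_refl n) hh hin
    have key : ∀ j, 1 ≤ j → j ≤ n - 1 →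
        (∀ v β, i < v → v ≤ m → j < β → β < n → A v β = false) → False := by
      intro j
      induction j using Nat.strong_induction_on with
      | _ j IH =>
        intro hj1 hjn INV
        rcases witness hA (by omega) (by omega) hj1 (by omega) (hz j hj1 (by omega)) with
          ⟨r₂, r₃, c₁, c₂, h1, h2, h3, h4, h5, h6, hb, hc⟩ |
          ⟨r₁, r₃, c₂, c₃, h1, h2, h3, h4, h5, h6, h7, ha, hc⟩ |
          ⟨r₁, r₂, c₁, c₃, h1, h2, h3, h4, h5, h6, h7, ha, hb⟩
        · exact avoid_no hA.1 (by omega) h1 h2 h3 h4 h5 (by omega) (le_refl n) hin hb hc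
        · have hf := INV r₃ c₂ h3 h4 (by omega) (by omega)
          rw [hf] at hc; exact Bool.noConfusion hc
        · have INV' : ∀ v β, i < v → v ≤ m → c₁ < β → β < n → A v β = false := by
            intro v β hv1 hv2 hβ1 hβ2
            by_cases hβj : j < β
            · exact INV v β hv1 hv2 hβj hβ2
            · exact bool_tf fun hh =>
                avoid_no hA.1 h1 h2 (by omega) hv2 h4 hβ1 (by omega) h7 ha hb hh
          exact IH c₁ (by omega) h4 (by omega) INV'
    refine key (n-1) (by omega) (le_refl _) ?_
    intro v β h1 h2 h3 h4
    exact absurd h3 (by omega)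
  · -- q < n
    have h_les : ∀ r c, 1 ≤ r → r ≤ i → q < c → c ≤ n → A r c = false := fun r c h1 h2 h3 h4 =>
      hqmax c h3 h4 r h1 h2
    have hkill : ∀ z y z' y', i < z → z < z' → z' ≤ m → 1 ≤ y → y < y' → y' < q →
        A z y = true → A z' y' = true → False := by
      intro z y z' y' k1 k2 k3 k4 k5 k6 ky ky'
      exact avoid_no hA.1 hp1 (by omega) k2 k3 k4 k5 k6 hqn hApq ky ky'
    rcases witness hA (by omega) (by omega) (by omega) (le_refl n)
        (h_les i n hi1 (le_refl i) hqlt (le_refl n)) with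
      ⟨r₂, r₃, c₁, c₂, k1, k2, k3, k4, k5, k6, hb, hc⟩ |
      ⟨r₁, r₃, c₂, c₃, k⟩ | ⟨r₁, r₂, c₁, c₃, k⟩
    · -- got below pair, c₂ ≥ q
      have hc2q : q ≤ c₂ := by
        by_contra hcc
        exact hkill r₂ c₁ r₃ c₂ k1 k2 k3 k4 k5 (by omega) hb hc
      have hPs : ∃ jj, q ≤ jj ∧ ∃ r, i < r ∧ r ≤ m ∧ A r jj = true := ⟨c₂, hc2q, r₃, by omega, k3, hc⟩
      set s := Nat.find hPs with hsdef
      obtain ⟨hqs, v, hvi, hvm, hAvs⟩ := Nat.find_spec hPs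
      have smin : ∀ jj, jj < s → ¬ (q ≤ jj ∧ ∃ r, i < r ∧ r ≤ m ∧ A r jj = true) := fun jj h =>
        Nat.find_min hPs h
      have hs_le : s ≤ c₂ := Nat.find_min' hPs ⟨hc2q, r₃, by omega, k3, hc⟩
      cases hAis : A i s with
      | true =>
        have hsq : s = q := by
          have : s ≤ q := Nat.le_findGreatest (by omega) ⟨by omega, i, hi1, le_refl i, hAis⟩
          omega
        have hAiq : A i q = true := hsq ▸ hAis
        by_cases hW : ∃ jj, 1 ≤ jj ∧ jj < q ∧ ∃ r, i < r ∧ r ≤ m ∧ A r jj = true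
        · set PW : ℕ → Prop := fun jj => 1 ≤ jj ∧ jj < q ∧ ∃ r, i < r ∧ r ≤ m ∧ A r jj = true
            with hPWdef
          obtain ⟨j0, hj0⟩ := hW
          have hPWu : PW (Nat.findGreatest PW n) :=
            Nat.findGreatest_spec (m := j0) (by omega) hj0
          set u : ℕ := Nat.findGreatest PW n with hudef
          obtain ⟨hu1, huq, w, hwi, hwm, hAwu⟩ := hPWu
          have hAiu : A i u = false := bool_tf fun hh => hsingle hu1 huq hqn hh hAiq
          rcases witness hA (by omega) (by omega) hu1 (by omega) hAiu with
            ⟨r₂', r₃', c₁', c₂', h1, h2, h3, h4, h5, h6, hb', hc'⟩ |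
            ⟨r₁', r₃', c₂', c₃', h1, h2, h3, h4, h5, h6, h7, ha', hc'⟩ |
            ⟨r₁', r₂', c₁', c₃', h1, h2, h3, h4, h5, h6, h7, ha', hb'⟩
          · exact hkill r₂' c₁' r₃' c₂' h1 h2 h3 h4 h5 (by omega) hb' hc'
          · have hc3q : c₃' ≤ q := by
              by_contra hcc
              have hf := h_les r₁' c₃' h1 (by omega) (by omega) h7
              rw [hf] at ha'; exact Bool.noConfusion ha'
            exact Nat.findGreatest_is_greatest (n := n) (show u < c₂' by omega) (by omega)
              ⟨by omega, by omega, r₃', h3, h4, hc'⟩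
          · exact avoid_no hA.1 h1 h2 (by omega) hwm h4 h5 h6 h7 ha' hb' hAwu
        · push_neg at hW
          have hAi1 : A i 1 = false := bool_tf fun hh => hsingle (le_refl 1) (by omega) hqn hh hAiq
          rcases witness hA (by omega) (by omega) (le_refl 1) (by omega) hAi1 with
            ⟨r₂', r₃', c₁', c₂', h1, h2, h3, h4, h5, h6, hb', hc'⟩ |
            ⟨r₁', r₃', c₂', c₃', h1, h2, h3, h4, h5, h6, h7, ha', hc'⟩ |
            ⟨r₁', r₂', c₁', c₃', h1, h2, h3, h4, h5, h6, h7, ha', hb'⟩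
          · omega
          · have hc3q : c₃' ≤ q := by
              by_contra hcc
              have hf := h_les r₁' c₃' h1 (by omega) (by omega) h7
              rw [hf] at ha'; exact Bool.noConfusion ha'
            exact hW c₂' (by omega) (by omega) r₃' h3 h4 hc'
          · omega
      | false =>
        rcases witness hA (by omega) (by omega) (by omega) (by omega) hAis with
          ⟨r₂', r₃', c₁', c₂', h1, h2, h3, h4, h5, h6, hb', hc'⟩ |
          ⟨r₁', r₃', c₂', c₃', h1, h2, h3, h4, h5, h6, h7, ha', hc'⟩ |
          ⟨r₁', r₂', c₁', c₃', h1, h2, h3, h4, h5, h6, h7, ha', hb'⟩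
        · by_cases hcc : c₂' < q
          · exact hkill r₂' c₁' r₃' c₂' h1 h2 h3 h4 h5 hcc hb' hc'
          · exact smin c₂' h6 ⟨by omega, r₃', by omega, h3, hc'⟩
        · have hf := h_les r₁' c₃' h1 (by omega) (by omega) h7
          rw [hf] at ha'; exact Bool.noConfusion ha'
        · have hf := h_les r₁' c₃' h1 (by omega) (by omega) h7
          rw [hf] at ha'; exact Bool.noConfusion ha'
    · omega
    · omega

end Work3

/-- `(i,c)` is a row-interior one. -/
def IsIntOne (A : ℕ → ℕ → Bool) (n c i : ℕ) : Prop :=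
  A i c = true ∧ (∃ j, 1 ≤ j ∧ j < c ∧ A i j = true) ∧ (∃ j, c < j ∧ j ≤ n ∧ A i j = true)

section Work4
variable {m n : ℕ} {A : ℕ → ℕ → Bool}

lemma col_interior (hA : MaximalAvoid312 m n A) (hm : 3 ≤ m) (hn : 3 ≤ n)
    {c : ℕ} (hc2 : 2 ≤ c) (hcn : c ≤ n - 1) :
    ∃ i1 i2, 1 ≤ i1 ∧ i1 < i2 ∧ i2 ≤ m ∧ IsIntOne A n c i1 ∧ IsIntOne A n c i2 ∧
      ∀ i, 1 ≤ i → i ≤ m → IsIntOne A n c i → i = i1 ∨ i = i2 := by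
  classical
  have hm1n : A (m-1) n = true := forced_m1n hA hm hn
  -- u := topmost row with a one strictly right of c
  have hPu : ∃ r, (1 ≤ r ∧ r ≤ m) ∧ ∃ j, c < j ∧ j ≤ n ∧ A r j = true :=
    ⟨m-1, ⟨by omega, by omega⟩, n, by omega, le_refl n, hm1n⟩
  set u := Nat.find hPu with hudef
  obtain ⟨⟨hu1, hum⟩, ru, hruc, hrun, hAuru⟩ := Nat.find_spec hPu
  have hu_le : u ≤ m - 1 := Nat.find_min' hPu ⟨⟨by omega, by omega⟩, n, by omega, le_refl n, hm1n⟩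
  have humin : ∀ r, r < u → 1 ≤ r → r ≤ m → ∀ j, c < j → j ≤ n → A r j = false := by
    intro r hr h1 h2 j hj1 hj2
    exact bool_tf fun hh => Nat.find_min hPu hr ⟨⟨h1, h2⟩, j, hj1, hj2, hh⟩
  -- Claim A part 1 : row u has a one strictly left of c
  have hlu : ∃ j, 1 ≤ j ∧ j < c ∧ A u j = true := by
    by_contra hL
    push_neg at hL
    have hL' : ∀ j, 1 ≤ j → j < c → A u j = false := fun j a b => bool_tf (hL j a b)
    by_cases hW : ∃ jj, (1 ≤ jj ∧ jj < c) ∧ ∃ r, u < r ∧ r ≤ m ∧ A r jj = true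
    · set PW : ℕ → Prop := fun jj => (1 ≤ jj ∧ jj < c) ∧ ∃ r, u < r ∧ r ≤ m ∧ A r jj = true
        with hPWdef
      obtain ⟨j0, hj0⟩ := hW
      have hPWu : PW (Nat.findGreatest PW n) :=
        Nat.findGreatest_spec (m := j0) (by omega) hj0
      set us := Nat.findGreatest PW n with husdef
      obtain ⟨⟨hus1, husc⟩, w, hwu, hwm, hAwus⟩ := hPWu
      rcases witness hA hu1 hum hus1 (by omega) (hL' us hus1 husc) with
        ⟨r₂, r₃, c₁, c₂, h1, h2, h3, h4, h5, h6, hb, hc⟩ |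
        ⟨r₁, r₃, c₂, c₃, h1, h2, h3, h4, h5, h6, h7, ha, hc⟩ |
        ⟨r₁, r₂, c₁, c₃, h1, h2, h3, h4, h5, h6, h7, ha, hb⟩
      · exact avoid_no hA.1 hu1 h1 h2 h3 h4 h5 (by omega) hrun hAuru hb hc
      · have hc3c : c₃ ≤ c := by
          by_contra hcc
          have hf := humin r₁ h2 h1 (by omega) c₃ (by omega) h7
          rw [hf] at ha; exact Bool.noConfusion ha
        exact Nat.findGreatest_is_greatest (show Nat.findGreatest PW n < c₂ by omega)
          (by omega) ⟨⟨by omega, by omega⟩, r₃, h3, h4, hc⟩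
      · exact avoid_no hA.1 h1 h2 (by omega) hwm h4 h5 h6 h7 ha hb hAwus
    · rcases witness hA hu1 hum (le_refl 1) (by omega) (hL' 1 (le_refl 1) (by omega)) with
        ⟨r₂, r₃, c₁, c₂, h1, h2, h3, h4, h5, h6, hb, hc⟩ |
        ⟨r₁, r₃, c₂, c₃, h1, h2, h3, h4, h5, h6, h7, ha, hc⟩ |
        ⟨r₁, r₂, c₁, c₃, h1, h2, h3, h4, h5, h6, h7, ha, hb⟩
      · omega
      · have hc3c : c₃ ≤ c := by
          by_contra hcc
          have hf := humin r₁ h2 h1 (by omega) c₃ (by omega) h7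
          rw [hf] at ha; exact Bool.noConfusion ha
        exact hW ⟨c₂, ⟨by omega, by omega⟩, r₃, h3, h4, hc⟩
      · omega
  obtain ⟨lu, hlu1, hluc, hAulu⟩ := hlu
  -- Claim A part 2 : A u c = true
  have hAuc : A u c = true := by
    by_contra hcc
    rcases witness hA hu1 hum (by omega) (by omega) (bool_tf hcc) with
      ⟨r₂, r₃, c₁, c₂, h1, h2, h3, h4, h5, h6, hb, hc⟩ |
      ⟨r₁, r₃, c₂, c₃, h1, h2, h3, h4, h5, h6, h7, ha, hc⟩ |
      ⟨r₁, r₂, c₁, c₃, h1, h2, h3, h4, h5, h6, h7, ha, hb⟩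
    · exact avoid_no hA.1 hu1 h1 h2 h3 h4 h5 (by omega) hrun hAuru hb hc
    · exact avoid_no hA.1 h1 h2 h3 h4 hlu1 (by omega) h6 h7 ha hAulu hc
    · have hf := humin r₁ (by omega) h1 (by omega) c₃ h6 h7
      rw [hf] at ha; exact Bool.noConfusion ha
  -- u'' := topmost row strictly below u with a one strictly left of c
  have hPv : ∃ r, (u < r ∧ r ≤ m) ∧ ∃ j, 1 ≤ j ∧ j < c ∧ A r j = true :=
    ⟨m, ⟨by omega, le_refl m⟩, 1, le_refl 1, by omega, forced_m1 hA hm hn⟩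
  set v := Nat.find hPv with hvdef
  obtain ⟨⟨huv, hvm⟩, lv, hlv1, hlvc, hAvlv⟩ := Nat.find_spec hPv
  have hvmin : ∀ r, u < r → r < v → ∀ j, 1 ≤ j → j < c → A r j = false := by
    intro r hr1 hr2 j j1 j2
    exact bool_tf fun hh => Nat.find_min hPv hr2 ⟨⟨hr1, by omega⟩, j, j1, j2, hh⟩
  -- Claim B : row v has a one strictly right of c
  have hrv : ∃ j, c < j ∧ j ≤ n ∧ A v j = true := by
    by_contra hR
    push_neg at hR
    have hR' : ∀ j, c < j → j ≤ n → A v j = false := fun j a b => bool_tf (hR j a b)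
    set Pq : ℕ → Prop := fun jj => jj ≤ n ∧ ∃ r, 1 ≤ r ∧ r < v ∧ A r jj = true with hPqdef2
    have hPqru : Pq ru := ⟨hrun, u, hu1, huv, hAuru⟩
    have hq1 : ru ≤ Nat.findGreatest Pq n := Nat.le_findGreatest hrun hPqru
    have hPqq : Pq (Nat.findGreatest Pq n) := Nat.findGreatest_spec hrun hPqru
    set qh := Nat.findGreatest Pq n with hqhdef
    obtain ⟨hqhn, wh, hwh1, hwhv, hAwhqh⟩ := hPqq
    rcases witness hA (by omega) hvm (by omega) hqhn (hR' qh (by omega) hqhn) with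
      ⟨r₂, r₃, c₁, c₂, h1, h2, h3, h4, h5, h6, hb, hc⟩ |
      ⟨r₁, r₃, c₂, c₃, h1, h2, h3, h4, h5, h6, h7, ha, hc⟩ |
      ⟨r₁, r₂, c₁, c₃, h1, h2, h3, h4, h5, h6, h7, ha, hb⟩
    · exact avoid_no hA.1 hwh1 (by omega) h2 h3 h4 h5 h6 hqhn hAwhqh hb hc
    · exact avoid_no hA.1 h1 h2 h3 h4 hlv1 (by omega) h6 h7 ha hAvlv hc
    · exact Nat.findGreatest_is_greatest (show Nat.findGreatest Pq n < c₃ by omega) h7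
        ⟨h7, r₁, h1, by omega, ha⟩
  obtain ⟨rv, hrvc, hrvn, hAvrv⟩ := hrv
  -- Claim C : A v c = true
  have hAvc : A v c = true := by
    by_contra hcc
    rcases witness hA (by omega) hvm (by omega) (by omega) (bool_tf hcc) with
      ⟨r₂, r₃, c₁, c₂, h1, h2, h3, h4, h5, h6, hb, hc⟩ |
      ⟨r₁, r₃, c₂, c₃, h1, h2, h3, h4, h5, h6, h7, ha, hc⟩ |
      ⟨r₁, r₂, c₁, c₃, h1, h2, h3, h4, h5, h6, h7, ha, hb⟩
    · exact avoid_no hA.1 (by omega) h1 h2 h3 h4 h5 (by omega) hrvn hAvrv hb hc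
    · exact avoid_no hA.1 h1 h2 h3 h4 hlv1 (by omega) h6 h7 ha hAvlv hc
    · by_cases hr2u : u < r₂
      · have hf := hvmin r₂ hr2u h3 c₁ h4 h5
        rw [hf] at hb; exact Bool.noConfusion hb
      · have hf := humin r₁ (by omega) h1 (by omega) c₃ h6 h7
        rw [hf] at ha; exact Bool.noConfusion ha
  refine ⟨u, v, hu1, huv, hvm, ⟨hAuc, ⟨lu, hlu1, hluc, hAulu⟩, ⟨ru, hruc, hrun, hAuru⟩⟩,
    ⟨hAvc, ⟨lv, hlv1, hlvc, hAvlv⟩, ⟨rv, hrvc, hrvn, hAvrv⟩⟩, ?_⟩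
  rintro i h1 h2 ⟨hAic, ⟨jl, hjl1, hjlc, hAijl⟩, ⟨jr, hjrc, hjrn, hAijr⟩⟩
  rcases lt_trichotomy i u with hiu | hiu | hiu
  · have hf := humin i hiu h1 h2 jr hjrc hjrn
    rw [hf] at hAijr; exact Bool.noConfusion hAijr
  · exact Or.inl hiu
  rcases lt_trichotomy i v with hiv | hiv | hiv
  · have hf := hvmin i hiu hiv jl hjl1 hjlc
    rw [hf] at hAijl; exact Bool.noConfusion hAijl
  · exact Or.inr hiv
  · exact absurd (avoid_no hA.1 hu1 huv hiv h2 hlv1 hlvc (by omega) hrun hAuru hAvlv hAic) not_false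
end Work4

section Count
open Finset
variable {m n : ℕ} {A : ℕ → ℕ → Bool}

/-- generic fiberwise slicing of a filtered product -/
lemma prod_filter_card (P : ℕ → ℕ → Prop) [∀ i j, Decidable (P i j)] (a b : ℕ) :
    (((Finset.Icc 1 a) ×ˢ (Finset.Icc 1 b)).filter fun p => P p.1 p.2).card
      = ∑ i ∈ Finset.Icc 1 a, ((Finset.Icc 1 b).filter fun j => P i j).card := by
  classical
  rw [Finset.card_eq_sum_card_fiberwise (f := fun p => p.1) (t := Finset.Icc 1 a)
    (by intro p hp; simp only [Finset.mem_coe, Finset.mem_filter, Finset.mem_product] at hp; exact hp.1.1)]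
  refine Finset.sum_congr rfl fun i hi => ?_
  refine Finset.card_nbij' (fun p => p.2) (fun j => (i, j)) ?_ ?_ ?_ ?_
  · intro p hp
    simp only [Finset.mem_coe, Finset.mem_filter, Finset.mem_product] at hp ⊢
    obtain ⟨⟨⟨_, hb⟩, hP⟩, h1⟩ := hp
    subst h1; exact ⟨hb, hP⟩
  · intro j hj
    simp only [Finset.mem_coe, Finset.mem_filter, Finset.mem_product] at hj ⊢
    exact ⟨⟨⟨hi, hj.1⟩, hj.2⟩, trivial⟩
  · intro p hp
    simp only [Finset.mem_coe, Finset.mem_filter] at hp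
    obtain ⟨-, h1⟩ := hp
    exact Prod.ext h1.symm rfl
  · intro j hj; rfl

/-- same, slicing by columns -/
lemma prod_filter_card' (P : ℕ → ℕ → Prop) [∀ i j, Decidable (P i j)] (a b : ℕ) :
    (((Finset.Icc 1 a) ×ˢ (Finset.Icc 1 b)).filter fun p => P p.1 p.2).card
      = ∑ j ∈ Finset.Icc 1 b, ((Finset.Icc 1 a).filter fun i => P i j).card := by
  classical
  rw [Finset.card_eq_sum_card_fiberwise (f := fun p => p.2) (t := Finset.Icc 1 b)
    (by intro p hp; simp only [Finset.mem_coe, Finset.mem_filter, Finset.mem_product] at hp; exact hp.1.2)]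
  refine Finset.sum_congr rfl fun j hj => ?_
  refine Finset.card_nbij' (fun p => p.1) (fun i => (i, j)) ?_ ?_ ?_ ?_
  · intro p hp
    simp only [Finset.mem_coe, Finset.mem_filter, Finset.mem_product] at hp ⊢
    obtain ⟨⟨⟨ha, _⟩, hP⟩, h1⟩ := hp
    subst h1; exact ⟨ha, hP⟩
  · intro i hi
    simp only [Finset.mem_coe, Finset.mem_filter, Finset.mem_product] at hi ⊢
    exact ⟨⟨⟨hi.1, hj⟩, hi.2⟩, trivial⟩
  · intro p hp
    simp only [Finset.mem_coe, Finset.mem_filter] at hp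
    obtain ⟨-, h1⟩ := hp
    exact Prod.ext rfl h1.symm
  · intro i hi; rfl

open scoped Classical in
lemma row_card (hA : MaximalAvoid312 m n A) (hm : 3 ≤ m) (hn : 3 ≤ n)
    {i : ℕ} (hi1 : 1 ≤ i) (him : i ≤ m) :
    ((Finset.Icc 1 n).filter fun j => A i j = true).card
      = 2 + ((Finset.Icc 1 n).filter fun j => IsIntOne A n j i).card := by
  classical
  obtain ⟨a, b, ha1, hab, hbn, hAa, hAb⟩ := row_two hA hm hn hi1 him
  set R := (Finset.Icc 1 n).filter fun j => A i j = true with hRdef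
  have haR : a ∈ R := by simp [hRdef, Finset.mem_Icc]; exact ⟨⟨ha1, by omega⟩, hAa⟩
  have hbR : b ∈ R := by simp [hRdef, Finset.mem_Icc]; exact ⟨⟨by omega, hbn⟩, hAb⟩
  have hne : R.Nonempty := ⟨a, haR⟩
  set L := R.min' hne with hLdef
  set Rr := R.max' hne with hRrdef
  have hLmem : L ∈ R := R.min'_mem hne
  have hRmem : Rr ∈ R := R.max'_mem hne
  have hLR : L < Rr := by
    have h1 : L ≤ a := R.min'_le a haR
    have h2 : b ≤ Rr := R.le_max' b hbR
    omega
  have hmemR : ∀ j, j ∈ R ↔ (1 ≤ j ∧ j ≤ n) ∧ A i j = true := by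
    intro j; simp [hRdef, Finset.mem_Icc]
  have hIR : (Finset.Icc 1 n).filter (fun j => IsIntOne A n j i) = R \ {L, Rr} := by
    ext j
    simp only [Finset.mem_filter, Finset.mem_sdiff, Finset.mem_insert, Finset.mem_singleton,
      Finset.mem_Icc]
    constructor
    · rintro ⟨⟨hj1, hjn⟩, hAij, ⟨jl, hl1, hlj, hAjl⟩, ⟨jr, hrj, hrn, hAjr⟩⟩
      have hjR : j ∈ R := (hmemR j).2 ⟨⟨hj1, hjn⟩, hAij⟩
      have hlR : jl ∈ R := (hmemR jl).2 ⟨⟨hl1, by omega⟩, hAjl⟩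
      have hrR : jr ∈ R := (hmemR jr).2 ⟨⟨by omega, hrn⟩, hAjr⟩
      have h1 : L ≤ jl := R.min'_le jl hlR
      have h2 : jr ≤ Rr := R.le_max' jr hrR
      exact ⟨hjR, by omega⟩
    · rintro ⟨hjR, hne2⟩
      obtain ⟨⟨hj1, hjn⟩, hAij⟩ := (hmemR j).1 hjR
      have h1 : L ≤ j := R.min'_le j hjR
      have h2 : j ≤ Rr := R.le_max' j hjR
      obtain ⟨⟨hL1, hLn⟩, hAiL⟩ := (hmemR L).1 hLmem
      obtain ⟨⟨hR1, hRn⟩, hAiR⟩ := (hmemR Rr).1 hRmem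
      exact ⟨⟨hj1, hjn⟩, hAij, ⟨L, hL1, by omega, hAiL⟩, ⟨Rr, by omega, hRn, hAiR⟩⟩
  have hsub : {L, Rr} ⊆ R := by
    intro x hx
    simp only [Finset.mem_insert, Finset.mem_singleton] at hx
    rcases hx with rfl | rfl
    · exact hLmem
    · exact hRmem
  have hcardp : ({L, Rr} : Finset ℕ).card = 2 := by
    rw [Finset.card_insert_of_notMem (by simp; omega), Finset.card_singleton]
  have hge : 2 ≤ R.card := by
    calc 2 = ({L, Rr} : Finset ℕ).card := hcardp.symm
    _ ≤ R.card := Finset.card_le_card hsub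
  rw [hIR, Finset.card_sdiff_of_subset hsub, hcardp]
  omega

open scoped Classical in
lemma col_card (hA : MaximalAvoid312 m n A) (hm : 3 ≤ m) (hn : 3 ≤ n)
    {c : ℕ} (hc1 : 1 ≤ c) (hcn : c ≤ n) :
    ((Finset.Icc 1 m).filter fun i => IsIntOne A n c i).card
      = if 2 ≤ c ∧ c ≤ n - 1 then 2 else 0 := by
  classical
  split_ifs with hc
  · obtain ⟨i1, i2, h1, h2, h3, hI1, hI2, huniq⟩ := col_interior hA hm hn hc.1 hc.2
    have : (Finset.Icc 1 m).filter (fun i => IsIntOne A n c i) = {i1, i2} := by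
      ext i
      simp only [Finset.mem_filter, Finset.mem_insert, Finset.mem_singleton, Finset.mem_Icc]
      constructor
      · rintro ⟨⟨hi1, him⟩, hint⟩
        exact huniq i hi1 him hint
      · rintro (rfl | rfl)
        · exact ⟨⟨h1, by omega⟩, hI1⟩
        · exact ⟨⟨by omega, h3⟩, hI2⟩
    rw [this, Finset.card_insert_of_notMem (by simp; omega), Finset.card_singleton]
  · have : (Finset.Icc 1 m).filter (fun i => IsIntOne A n c i) = ∅ := by
      ext i
      simp only [Finset.mem_filter, Finset.notMem_empty, iff_false, not_and]
      rintro hi ⟨hAic, ⟨jl, hl1, hlc, hAl⟩, ⟨jr, hrc, hrn, hAr⟩⟩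
      omega
    rw [this, Finset.card_empty]

end Count

open scoped Classical in
theorem stmt_15' (m n : ℕ) (hm : 3 ≤ m) (hn : 3 ≤ n) (A : ℕ → ℕ → Bool)
    (hA : MaximalAvoid312 m n A) : onesCount m n A = 2 * (m + n - 2) := by
  classical
  unfold onesCount
  rw [prod_filter_card (fun i j => A i j = true) m n]
  have hrw : ∀ i ∈ Finset.Icc 1 m, ((Finset.Icc 1 n).filter fun j => A i j = true).card
      = 2 + ((Finset.Icc 1 n).filter fun j => IsIntOne A n j i).card := by
    intro i hi
    rw [Finset.mem_Icc] at hi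
    exact row_card hA hm hn hi.1 hi.2
  rw [Finset.sum_congr rfl hrw, Finset.sum_add_distrib, Finset.sum_const, Nat.card_Icc]
  have hswap : (∑ i ∈ Finset.Icc 1 m, ((Finset.Icc 1 n).filter fun j => IsIntOne A n j i).card)
      = ∑ c ∈ Finset.Icc 1 n, ((Finset.Icc 1 m).filter fun i => IsIntOne A n c i).card := by
    rw [← prod_filter_card (fun i j => IsIntOne A n j i) m n,
      prod_filter_card' (fun i j => IsIntOne A n j i) m n]
  rw [hswap]
  have hcols : (∑ c ∈ Finset.Icc 1 n, ((Finset.Icc 1 m).filter fun i => IsIntOne A n c i).card)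
      = ∑ c ∈ Finset.Icc 1 n, if 2 ≤ c ∧ c ≤ n - 1 then 2 else 0 := by
    refine Finset.sum_congr rfl fun c hc => ?_
    rw [Finset.mem_Icc] at hc
    exact col_card hA hm hn hc.1 hc.2
  rw [hcols, Finset.sum_ite, Finset.sum_const, Finset.sum_const]
  have hfil : (Finset.Icc 1 n).filter (fun c => 2 ≤ c ∧ c ≤ n - 1) = Finset.Icc 2 (n-1) := by
    ext c
    simp only [Finset.mem_filter, Finset.mem_Icc]
    omega
  simp only [hfil, Nat.card_Icc, smul_eq_mul, mul_zero, add_zero]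
  omega

theorem stmt_15 (m n : ℕ) (hm : 3 ≤ m) (hn : 3 ≤ n) (A : ℕ → ℕ → Bool)
    (hA : MaximalAvoid312 m n A) : onesCount m n A = 2 * (m + n - 2) := by
  exact stmt_15' m n hm hn A hA
end

section
/- For every n ≥ 1, there exist permutations σ₁, …, σₙ of {1, 2, …, n} such that (a) for every pair (i,j) with 1 ≤ i, j ≤ n there is exactly one index t with σ_t(i) = j (i.e. the corresponding permutation matrices sum to the n×n all-ones matrix J_n), and (b) each σ_t is both 123-avoiding and 312-avoiding. -/
/-- A permutation `σ` of `{0, …, n-1}` is 123-avoiding: there are no indices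
`i < j < l` with `σ i < σ j < σ l`. -/
def Perm123Avoiding {n : ℕ} (σ : Equiv.Perm (Fin n)) : Prop :=
  ¬ ∃ i j l : Fin n, i < j ∧ j < l ∧ σ i < σ j ∧ σ j < σ l

/-- A permutation `σ` of `{0, …, n-1}` is 312-avoiding: there are no indices
`i < j < l` with `σ j < σ l < σ i`. -/
def Perm312Avoiding {n : ℕ} (σ : Equiv.Perm (Fin n)) : Prop :=
  ¬ ∃ i j l : Fin n, i < j ∧ j < l ∧ σ j < σ l ∧ σ l < σ i

lemma sub_val_le {n : ℕ} [NeZero n] (t a : Fin n) (h : a.val ≤ t.val) :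
    (t - a).val = t.val - a.val := by
  have ha := a.isLt
  have ht := t.isLt
  rw [Fin.sub_def]
  simp only
  rw [show n - a.val + t.val = (t.val - a.val) + n by omega, Nat.add_mod_right,
    Nat.mod_eq_of_lt (by omega)]

lemma sub_val_gt {n : ℕ} [NeZero n] (t a : Fin n) (h : t.val < a.val) :
    (t - a).val = n + t.val - a.val := by
  have ha := a.isLt
  rw [Fin.sub_def]
  simp only
  rw [show n - a.val + t.val = n + t.val - a.val by omega,
    Nat.mod_eq_of_lt (by omega)]

lemma ascent_iff {n : ℕ} [NeZero n] (t a b : Fin n) (h : a < b)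
    (hab : (t - a) < (t - b)) : a.val ≤ t.val ∧ t.val < b.val := by
  rw [Fin.lt_def] at h hab
  by_contra hc
  rcases le_or_gt a.val t.val with h1 | h1
  · rcases le_or_gt b.val t.val with h2 | h2
    · rw [sub_val_le t a h1, sub_val_le t b h2] at hab; omega
    · exact hc ⟨h1, h2⟩
  · rw [sub_val_gt t a h1, sub_val_gt t b (by omega)] at hab
    have := b.isLt
    omega

theorem stmt_17 (n : ℕ) (hn : 1 ≤ n) :
    ∃ σ : Fin n → Equiv.Perm (Fin n),
      (∀ i j : Fin n, ∃! t : Fin n, (σ t) i = j) ∧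
      ∀ t : Fin n, Perm123Avoiding (σ t) ∧ Perm312Avoiding (σ t) := by
  haveI : NeZero n := ⟨by omega⟩
  refine ⟨fun t => Equiv.subLeft t, ?_, ?_⟩
  · intro i j
    refine ⟨j + i, ?_, ?_⟩
    · simp [Equiv.subLeft]
    · intro t ht
      simp only [Equiv.subLeft_apply] at ht
      rw [sub_eq_iff_eq_add] at ht
      exact ht
  · intro t
    constructor
    · rintro ⟨i, j, l, hij, hjl, h1, h2⟩
      simp only [Equiv.subLeft_apply] at h1 h2
      obtain ⟨-, ha⟩ := ascent_iff t i j hij h1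
      obtain ⟨hb, -⟩ := ascent_iff t j l hjl h2
      omega
    · rintro ⟨i, j, l, hij, hjl, h1, h2⟩
      simp only [Equiv.subLeft_apply] at h1 h2
      obtain ⟨hb, hc⟩ := ascent_iff t j l hjl h1
      have hi : i.val ≤ t.val := le_trans (le_of_lt hij) hb
      have e1 : (t - i).val = t.val - i.val := sub_val_le t i hi
      have e2 : (t - l).val = n + t.val - l.val := sub_val_gt t l hc
      rw [Fin.lt_def, e1, e2] at h2
      have := l.isLt
      omega
end

section
/- Let k ≥ 4 and m, n ≥ k, and let A be a k12⋯(k−1)-avoiding m×n (0,1)-matrix with A(1,n) = 1. Then the number of 1's of A is at most (k−1)(m + n − (k−1)). -/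
/-- `A` is `k12⋯(k-1)`-avoiding: there are no strictly increasing rows
`r 0 < ⋯ < r (k-1)` and columns `c 0 < ⋯ < c (k-1)` in the array with
`A (r 0) (c (k-1)) = 1` and `A (r (t+1)) (c t) = 1` for `t = 0, …, k-2`. -/
def AvoidK1 (m n k : ℕ) (A : ℕ → ℕ → Bool) : Prop :=
  ¬ ∃ r c : ℕ → ℕ,
    (∀ t, t + 1 < k → r t < r (t + 1) ∧ c t < c (t + 1)) ∧
    (∀ t, t < k → 1 ≤ r t ∧ r t ≤ m ∧ 1 ≤ c t ∧ c t ≤ n) ∧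
    A (r 0) (c (k - 1)) = true ∧
    (∀ t, t + 1 < k → A (r (t + 1)) (c t) = true)


namespace Stmt18Aux

def chainLen (P : Finset (ℕ × ℕ)) (p : ℕ × ℕ) : ℕ :=
  ((P.filter fun q => q.1 < p.1 ∧ q.2 < p.2).attach.sup fun q => chainLen P q.1) + 1
termination_by p.1
decreasing_by exact (Finset.mem_filter.mp q.2).2.1

lemma chainLen_def (P : Finset (ℕ × ℕ)) (p : ℕ × ℕ) :
    chainLen P p =
      ((P.filter fun q => q.1 < p.1 ∧ q.2 < p.2).attach.sup fun q => chainLen P q.1) + 1 := by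
  rw [chainLen]

lemma one_le_chainLen (P : Finset (ℕ × ℕ)) (p : ℕ × ℕ) : 1 ≤ chainLen P p := by
  rw [chainLen_def]; omega

lemma chainLen_lt {P : Finset (ℕ × ℕ)} {p q : ℕ × ℕ} (hq : q ∈ P)
    (h1 : q.1 < p.1) (h2 : q.2 < p.2) : chainLen P q < chainLen P p := by
  have hqf : q ∈ P.filter fun r => r.1 < p.1 ∧ r.2 < p.2 :=
    Finset.mem_filter.mpr ⟨hq, h1, h2⟩
  have h := Finset.le_sup
    (f := fun r : {x // x ∈ P.filter fun r => r.1 < p.1 ∧ r.2 < p.2} => chainLen P r.1)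
    (Finset.mem_attach _ ⟨q, hqf⟩)
  have h' : chainLen P q ≤
      (P.filter fun r => r.1 < p.1 ∧ r.2 < p.2).attach.sup
        (fun r : {x // x ∈ P.filter fun r => r.1 < p.1 ∧ r.2 < p.2} => chainLen P r.1) := h
  rw [chainLen_def P p]
  omega

lemma exists_pred {P : Finset (ℕ × ℕ)} {p : ℕ × ℕ} (hp : 2 ≤ chainLen P p) :
    ∃ q ∈ P, q.1 < p.1 ∧ q.2 < p.2 ∧ chainLen P q + 1 = chainLen P p := by
  have hE := chainLen_def P p
  set F := P.filter fun q => q.1 < p.1 ∧ q.2 < p.2 with hF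
  have hne : F.attach.Nonempty := by
    rw [Finset.attach_nonempty_iff]
    by_contra h
    rw [Finset.not_nonempty_iff_eq_empty] at h
    rw [h] at hE
    simp at hE
    omega
  obtain ⟨r, hr, hrs⟩ := Finset.exists_mem_eq_sup F.attach hne (fun q => chainLen P q.1)
  have hrF : r.1 ∈ P ∧ (r.1 : ℕ × ℕ).1 < p.1 ∧ (r.1 : ℕ × ℕ).2 < p.2 :=
    Finset.mem_filter.mp r.2
  have h2 : chainLen P r.1 + 1 = chainLen P p := by
    rw [hE, hrs]
  exact ⟨r.1, hrF.1, hrF.2.1, hrF.2.2, h2⟩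

lemma exists_chain {P : Finset (ℕ × ℕ)} :
    ∀ N p, p ∈ P → chainLen P p ≤ N →
    ∃ f : ℕ → ℕ × ℕ, f (chainLen P p - 1) = p ∧
      (∀ s, s < chainLen P p → f s ∈ P) ∧
      (∀ s, s + 1 < chainLen P p → (f s).1 < (f (s+1)).1 ∧ (f s).2 < (f (s+1)).2) := by
  intro N
  induction N with
  | zero => intro p hp h; have := one_le_chainLen P p; omega
  | succ N ih =>
    intro p hp h
    by_cases h1 : chainLen P p = 1
    · refine ⟨fun _ => p, rfl, fun s hs => hp, fun s hs => by omega⟩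
    · have h2 : 2 ≤ chainLen P p := by have := one_le_chainLen P p; omega
      obtain ⟨q, hqP, hq1, hq2, hqL⟩ := exists_pred h2
      obtain ⟨f, hf1, hf2, hf3⟩ := ih q hqP (by omega)
      refine ⟨fun s => if s = chainLen P p - 1 then p else f s, by simp, ?_, ?_⟩
      · intro s hs
        by_cases hse : s = chainLen P p - 1
        · simpa [hse] using hp
        · have hsq : s < chainLen P q := by omega
          simpa [hse] using hf2 s hsq
      · intro s hs
        have hs1 : s ≠ chainLen P p - 1 := by omega
        by_cases hse : s + 1 = chainLen P p - 1
        · have hsq : s = chainLen P q - 1 := by omega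
          simp only [if_neg hs1, if_pos hse]
          rw [hsq, hf1]
          exact ⟨hq1, hq2⟩
        · simp only [if_neg hs1, if_neg hse]
          exact hf3 s (by omega)

lemma chainLen_coord {P : Finset (ℕ × ℕ)} {a b : ℕ}
    (hsub : ∀ p ∈ P, a ≤ p.1 ∧ b ≤ p.2) :
    ∀ N p, p ∈ P → chainLen P p ≤ N →
      a + chainLen P p ≤ p.1 + 1 ∧ b + chainLen P p ≤ p.2 + 1 := by
  intro N
  induction N with
  | zero => intro p hp h; have := one_le_chainLen P p; omega
  | succ N ih =>
    intro p hp h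
    by_cases h1 : chainLen P p = 1
    · have := hsub p hp; omega
    · have h2 : 2 ≤ chainLen P p := by have := one_le_chainLen P p; omega
      obtain ⟨q, hqP, hq1, hq2, hqL⟩ := exists_pred h2
      have := ih q hqP (by omega)
      omega

lemma antichain_card {S : Finset (ℕ × ℕ)} {a₁ a₂ b₁ b₂ : ℕ}
    (hsub : ∀ p ∈ S, a₁ ≤ p.1 ∧ p.1 ≤ a₂ ∧ b₁ ≤ p.2 ∧ p.2 ≤ b₂)
    (hanti : ∀ p ∈ S, ∀ q ∈ S, p.1 < q.1 → p.2 < q.2 → False) :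
    S.card ≤ (a₂ - a₁) + (b₂ - b₁) + 1 := by
  have key : S.card ≤ (Finset.Icc ((a₁:ℤ) - b₂) ((a₂:ℤ) - b₁)).card := by
    apply Finset.card_le_card_of_injOn (fun p => (p.1 : ℤ) - p.2)
    · intro p hp
      have := hsub p hp
      simp only [Finset.mem_coe, Finset.mem_Icc]
      omega
    · intro p hp q hq hpq
      simp only [Finset.mem_coe] at hp hq
      have h1 := hsub p hp
      have h2 := hsub q hq
      have e : (p.1 : ℤ) - p.2 = (q.1 : ℤ) - q.2 := hpq
      have a1 : ¬ (p.1 < q.1 ∧ p.2 < q.2) := fun h => hanti p hp q hq h.1 h.2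
      have a2 : ¬ (q.1 < p.1 ∧ q.2 < p.2) := fun h => hanti q hq p hp h.1 h.2
      have hco : p.1 = q.1 ∧ p.2 = q.2 := by omega
      exact Prod.ext hco.1 hco.2
  rw [Int.card_Icc] at key
  omega

lemma sum_lin (C : ℤ) (s : ℕ) :
    ∑ t ∈ Finset.Icc 1 s, (C - 2*(t:ℤ)) = s * C - s*(s+1) := by
  induction s with
  | zero => simp
  | succ s ih =>
    rw [Finset.sum_Icc_succ_top (by omega : 1 ≤ s + 1), ih]
    push_cast
    ring

end Stmt18Aux

open Stmt18Aux in
theorem stmt_18 (m n k : ℕ) (hk : 4 ≤ k) (hm : k ≤ m) (hn : k ≤ n)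
    (A : ℕ → ℕ → Bool) (hA : AvoidK1 m n k A) (h1n : A 1 n = true) :
    onesCount m n A ≤ (k - 1) * (m + n - (k - 1)) := by
  classical
  set P : Finset (ℕ × ℕ) :=
    ((Finset.Icc 2 m) ×ˢ (Finset.Icc 1 (n-1))).filter (fun p => A p.1 p.2 = true) with hPdef
  have hPmem : ∀ p ∈ P, 2 ≤ p.1 ∧ p.1 ≤ m ∧ 1 ≤ p.2 ∧ p.2 ≤ n - 1 ∧ A p.1 p.2 = true := by
    intro p hp
    rw [hPdef, Finset.mem_filter, Finset.mem_product, Finset.mem_Icc, Finset.mem_Icc] at hp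
    tauto
  -- chain length bound via avoidance
  have hLle : ∀ p ∈ P, chainLen P p ≤ k - 2 := by
    intro p hp
    by_contra hc
    push_neg at hc
    obtain ⟨f, hf1, hf2, hf3⟩ := exists_chain (chainLen P p) p hp le_rfl
    apply hA
    set r : ℕ → ℕ := fun t => if t = 0 then 1 else (f (t-1)).1 with hrdef
    set c : ℕ → ℕ := fun t => if t = k - 1 then n else (f t).2 with hcdef
    have hr0 : r 0 = 1 := by simp [hrdef]
    have hrpos : ∀ t, t ≠ 0 → r t = (f (t-1)).1 := by
      intro t h; simp [hrdef, h]
    have hck : c (k-1) = n := by simp [hcdef]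
    have hcne : ∀ t, t ≠ k - 1 → c t = (f t).2 := by
      intro t h; simp [hcdef, h]
    refine ⟨r, c, ?_, ?_, ?_, ?_⟩
    · intro t ht
      constructor
      · by_cases h0 : t = 0
        · subst h0
          rw [hr0, hrpos 1 (by omega), show (1:ℕ) - 1 = 0 from rfl]
          have := hPmem (f 0) (hf2 0 (by omega))
          omega
        · rw [hrpos t h0, hrpos (t+1) (by omega), show t + 1 - 1 = t from rfl]
          have h := hf3 (t-1) (by omega)
          rw [show t - 1 + 1 = t from by omega] at h
          exact h.1
      · by_cases hk1 : t + 1 = k - 1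
        · rw [hcne t (by omega), hk1, hck]
          have := hPmem (f t) (hf2 t (by omega))
          omega
        · rw [hcne t (by omega), hcne (t+1) (by omega)]
          exact (hf3 t (by omega)).2
    · intro t ht
      by_cases h0 : t = 0
      · subst h0
        rw [hr0, hcne 0 (by omega)]
        have := hPmem (f 0) (hf2 0 (by omega))
        omega
      · rw [hrpos t h0]
        by_cases hk1 : t = k - 1
        · rw [hk1, hck]
          have := hPmem (f (t-1)) (hf2 (t-1) (by omega))
          rw [hk1] at this
          omega
        · rw [hcne t hk1]
          have h1 := hPmem (f (t-1)) (hf2 (t-1) (by omega))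
          have h2 := hPmem (f t) (hf2 t (by omega))
          omega
    · rw [hr0, hck]
      exact h1n
    · intro t ht
      rw [hrpos (t+1) (by omega), hcne t (by omega), show t + 1 - 1 = t from rfl]
      exact (hPmem (f t) (hf2 t (by omega))).2.2.2.2
  -- fiberwise decomposition
  have hfib : ∀ p ∈ P, chainLen P p ∈ Finset.Icc 1 (k-2) := fun p hp =>
    Finset.mem_Icc.mpr ⟨one_le_chainLen P p, hLle p hp⟩
  have hcard := Finset.card_eq_sum_card_fiberwise hfib
  have hfiber : ∀ t ∈ Finset.Icc 1 (k-2),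
      (P.filter fun p => chainLen P p = t).card ≤ (m - (t+1)) + ((n-1) - t) + 1 := by
    intro t ht
    have ht' := Finset.mem_Icc.mp ht
    apply antichain_card
    · intro p hp
      rw [Finset.mem_filter] at hp
      have h1 := hPmem p hp.1
      have h2 := chainLen_coord (a := 2) (b := 1)
        (fun q hq => ⟨(hPmem q hq).1, (hPmem q hq).2.2.1⟩) (chainLen P p) p hp.1 le_rfl
      omega
    · intro p hp q hq h1 h2
      rw [Finset.mem_filter] at hp hq
      have := chainLen_lt hp.1 h1 h2
      omega
  -- card bound in ℤ
  have hsum : (P.card : ℤ) ≤ ((k:ℤ) - 2) * ((m:ℤ) + n - k) := by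
    rw [hcard]
    push_cast
    calc (∑ t ∈ Finset.Icc 1 (k-2), ((P.filter fun p => chainLen P p = t).card : ℤ))
        ≤ ∑ t ∈ Finset.Icc 1 (k-2), ((m:ℤ) + n - 1 - 2*(t:ℤ)) := by
          apply Finset.sum_le_sum
          intro t ht
          have h := hfiber t ht
          have ht' := Finset.mem_Icc.mp ht
          omega
      _ = ((k:ℤ) - 2) * ((m:ℤ) + n - k) := by
          rw [sum_lin ((m:ℤ) + n - 1) (k-2)]
          have hs2 : ((k-2:ℕ):ℤ) = (k:ℤ) - 2 := by omega
          rw [hs2]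
          ring
  -- split onesCount
  set R1 : Finset (ℕ × ℕ) :=
    (({1} : Finset ℕ) ×ˢ Finset.Icc 1 n).filter (fun p => A p.1 p.2 = true) with hR1def
  set Cn : Finset (ℕ × ℕ) :=
    ((Finset.Icc 2 m) ×ˢ ({n} : Finset ℕ)).filter (fun p => A p.1 p.2 = true) with hCndef
  have hsub : ((Finset.Icc 1 m ×ˢ Finset.Icc 1 n).filter fun p => A p.1 p.2 = true)
      ⊆ R1 ∪ Cn ∪ P := by
    intro p hp
    rw [Finset.mem_filter, Finset.mem_product, Finset.mem_Icc, Finset.mem_Icc] at hp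
    obtain ⟨⟨⟨h1, h2⟩, h3, h4⟩, hA'⟩ := hp
    simp only [Finset.mem_union, hR1def, hCndef, hPdef, Finset.mem_filter,
      Finset.mem_product, Finset.mem_singleton, Finset.mem_Icc]
    by_cases e1 : p.1 = 1
    · exact Or.inl (Or.inl ⟨⟨e1, h3, h4⟩, hA'⟩)
    · by_cases e2 : p.2 = n
      · exact Or.inl (Or.inr ⟨⟨⟨by omega, h2⟩, e2⟩, hA'⟩)
      · exact Or.inr ⟨⟨⟨by omega, h2⟩, by omega, by omega⟩, hA'⟩
  have h1c : R1.card ≤ n := by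
    calc R1.card ≤ (({1} : Finset ℕ) ×ˢ Finset.Icc 1 n).card := Finset.card_filter_le _ _
      _ = n := by simp
  have h2c : Cn.card ≤ m - 1 := by
    calc Cn.card ≤ ((Finset.Icc 2 m) ×ˢ ({n} : Finset ℕ)).card := Finset.card_filter_le _ _
      _ = m - 1 := by simp [Nat.card_Icc]
  have hsplit : onesCount m n A ≤ n + (m - 1) + P.card := by
    have c1 : onesCount m n A ≤ (R1 ∪ Cn ∪ P).card := Finset.card_le_card hsub
    have c2 := Finset.card_union_le (R1 ∪ Cn) P
    have c3 := Finset.card_union_le R1 Cn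
    omega
  -- finish
  have hid : ((k:ℤ) - 1) * ((m:ℤ) + n - ((k:ℤ) - 1))
      = ((k:ℤ) - 2) * ((m:ℤ) + n - k) + ((m:ℤ) + n - 1) := by ring
  have hfin : (onesCount m n A : ℤ) ≤ ((k:ℤ) - 1) * ((m:ℤ) + n - ((k:ℤ) - 1)) := by
    have h1 : (onesCount m n A : ℤ) ≤ (n:ℤ) + ((m:ℤ) - 1) + (P.card : ℤ) := by
      have := hsplit; omega
    linarith
  have hcast : (((k - 1) * (m + n - (k - 1)) : ℕ) : ℤ)
      = ((k:ℤ) - 1) * ((m:ℤ) + n - ((k:ℤ) - 1)) := by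
    have e1 : ((k - 1 : ℕ) : ℤ) = (k:ℤ) - 1 := by omega
    have e2 : ((m + n - (k - 1) : ℕ) : ℤ) = (m:ℤ) + n - ((k:ℤ) - 1) := by omega
    rw [Nat.cast_mul, e1, e2]
  have : (onesCount m n A : ℤ) ≤ (((k - 1) * (m + n - (k - 1)) : ℕ) : ℤ) := by
    rw [hcast]; exact hfin
  exact_mod_cast this
end
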